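/- arXiv:1506.03945 — 7 statements merged into one kernel-verified Lean document; each statement's English description precedes it below -/
import Mathlib

section
/- There exists a unique pair (V, λ) with V : I → ℝ measurable satisfying ∫_I V² dσ < ∞ and λ ∈ ℝ, such that V(σ) = κ(σ) + Φ(V(σ)) − λ for almost every σ ∈ I and ∫_I V(σ)·S(σ) dσ = 0. Uniqueness means: if (V′, λ′) is another such pair then λ′ = λ and V′ = V almost everywhere on I. -/
open MeasureTheory Set

/-- The pair (V, λ) solves the non-local problem: V is measurable, square
integrable on I = [0, ℓ], V = κ + Φ(V) − λ a.e. on I, and ∫_I V·S dσ = 0. -/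
def IsSolPair (Φ κ S : ℝ → ℝ) (ℓ : ℝ) (V : ℝ → ℝ) (lam : ℝ) : Prop :=
  Measurable V ∧
  IntegrableOn (fun σ => (V σ) ^ 2) (Icc 0 ℓ) ∧
  (∀ᵐ σ ∂(volume.restrict (Icc (0:ℝ) ℓ)), V σ = κ σ + Φ (V σ) - lam) ∧
  ∫ σ in Icc (0:ℝ) ℓ, V σ * S σ = 0

/-- existence and uniqueness of the pair (V, λ) solving
V = κ + Φ(V) − λ a.e. on I with ∫_I V·S dσ = 0. -/
theorem stmt1 (Φ : ℝ → ℝ) (J : ℝ) (hJ0 : 0 ≤ J) (hJ1 : J < 1)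
    (hΦlip : ∀ a b : ℝ, |Φ a - Φ b| ≤ J * |a - b|)
    (hΦbd : ∃ B : ℝ, ∀ x : ℝ, |Φ x| ≤ B)
    (ℓ : ℝ) (hℓ : 0 < ℓ)
    (κ S : ℝ → ℝ) (hκm : Measurable κ)
    (hκ2 : IntegrableOn (fun σ => (κ σ) ^ 2) (Icc 0 ℓ))
    (hSm : Measurable S)
    (ω MS : ℝ) (hω : 0 < ω) (hωMS : ω ≤ MS)
    (hS : ∀ᵐ σ ∂(volume.restrict (Icc (0:ℝ) ℓ)), ω ≤ S σ ∧ S σ ≤ MS) :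
    (∃ V : ℝ → ℝ, ∃ lam : ℝ, IsSolPair Φ κ S ℓ V lam) ∧
    (∀ V V' : ℝ → ℝ, ∀ lam lam' : ℝ,
      IsSolPair Φ κ S ℓ V lam → IsSolPair Φ κ S ℓ V' lam' →
      lam' = lam ∧ V' =ᵐ[volume.restrict (Icc (0:ℝ) ℓ)] V) := by
  obtain ⟨B, hB⟩ := hΦbd
  have hB0 : 0 ≤ B := le_trans (abs_nonneg _) (hB 0)
  have h1J : (0:ℝ) < 1 - J := by linarith
  have h1J' : (0:ℝ) < 1 + J := by linarith
  have hMS : 0 < MS := lt_of_lt_of_le hω hωMS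
  -- fixed point existence
  have hfixex : ∀ c : ℝ, ∃ x : ℝ, x = c + Φ x := by
    intro c
    have hlip : LipschitzWith J.toNNReal (fun x => c + Φ x) := by
      apply LipschitzWith.of_dist_le_mul
      intro a b
      rw [Real.dist_eq, Real.dist_eq, Real.coe_toNNReal _ hJ0]
      simpa using hΦlip a b
    have hcontr : ContractingWith J.toNNReal (fun x => c + Φ x) := by
      refine ⟨?_, hlip⟩
      rw [← NNReal.coe_lt_coe, Real.coe_toNNReal _ hJ0]
      exact hJ1
    exact ⟨ContractingWith.fixedPoint _ hcontr, (hcontr.fixedPoint_isFixedPt).symm⟩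
  choose g hg using hfixex
  -- fixed point uniqueness
  have huniq : ∀ c x y : ℝ, x = c + Φ x → y = c + Φ y → x = y := by
    intro c x y hx hy
    have h1 : |x - y| = |Φ x - Φ y| := by rw [show x - y = Φ x - Φ y by linarith]
    have h2 := hΦlip x y
    have h3 : |x - y| ≤ J * |x - y| := h1 ▸ h2
    have h4 : |x - y| ≤ 0 := by nlinarith [abs_nonneg (x - y)]
    have := abs_eq_zero.mp (le_antisymm h4 (abs_nonneg _))
    linarith [sub_eq_zero.mp this]
  -- sandwich bounds for g
  have hgsand : ∀ c c', c ≤ c' →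
      (c' - c) / (1 + J) ≤ g c' - g c ∧ g c' - g c ≤ (c' - c) / (1 - J) := by
    intro c c' hcc
    have h1 := hg c
    have h2 := hg c'
    have hp := hΦlip (g c') (g c)
    have hd : g c' - g c = (c' - c) + (Φ (g c') - Φ (g c)) := by linarith
    rcases le_or_gt 0 (g c' - g c) with h | h
    · rw [abs_of_nonneg h] at hp
      have hp2 := abs_le.mp hp
      constructor
      · rw [div_le_iff₀ h1J']; nlinarith [hp2.1, hp2.2]
      · rw [le_div_iff₀ h1J]; nlinarith [hp2.1, hp2.2]
    · exfalso
      rw [abs_of_neg h] at hp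
      have hp2 := abs_le.mp hp
      nlinarith [hp2.1, hp2.2]
  -- Lipschitz and continuity of g
  have hglip : ∀ c c', |g c - g c'| ≤ |c - c'| / (1 - J) := by
    intro c c'
    rcases le_total c c' with h | h
    · obtain ⟨h1, h2⟩ := hgsand c c' h
      have hnn : 0 ≤ g c' - g c :=
        le_trans (div_nonneg (by linarith) h1J'.le) h1
      rw [abs_sub_comm, abs_of_nonneg hnn, abs_sub_comm c c', abs_of_nonneg (by linarith : (0:ℝ) ≤ c' - c)]
      exact h2
    · obtain ⟨h1, h2⟩ := hgsand c' c h
      have hnn : 0 ≤ g c - g c' :=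
        le_trans (div_nonneg (by linarith) h1J'.le) h1
      rw [abs_of_nonneg hnn, abs_of_nonneg (by linarith : (0:ℝ) ≤ c - c')]
      exact h2
  have hgcont : Continuous g := by
    have : LipschitzWith (Real.toNNReal (1 / (1 - J))) g := by
      apply LipschitzWith.of_dist_le_mul
      intro a b
      rw [Real.dist_eq, Real.dist_eq, Real.coe_toNNReal _ (by positivity)]
      calc |g a - g b| ≤ |a - b| / (1 - J) := hglip a b
        _ = 1 / (1 - J) * |a - b| := by ring
    exact this.continuous
  have hgbd : ∀ c, |g c| ≤ |c| + B := by
    intro c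
    rw [hg c]
    calc |c + Φ (g c)| ≤ |c| + |Φ (g c)| := abs_add_le _ _
      _ ≤ |c| + B := by linarith [hB (g c)]
  -- integrability preliminaries
  have hconst : ∀ c : ℝ, IntegrableOn (fun _ => c) (Icc (0:ℝ) ℓ) volume := by
    intro c
    refine integrableOn_const (ne_of_lt ?_)
    rw [Real.volume_Icc]
    exact ENNReal.ofReal_lt_top
  have hκ1 : IntegrableOn (fun σ => |κ σ|) (Icc 0 ℓ) volume := by
    refine Integrable.mono' (g := fun σ => ((κ σ)^2 + 1) / 2) ?_ ?_ ?_
    · exact (hκ2.add (hconst 1)).div_const 2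
    · exact (hκm.abs).aestronglyMeasurable
    · refine ae_of_all _ fun σ => ?_
      rw [Real.norm_eq_abs, abs_abs]
      nlinarith [sq_abs (κ σ), sq_nonneg (|κ σ| - 1)]
  set V : ℝ → ℝ → ℝ := fun lam σ => g (κ σ - lam) with hVdef
  have hVm : ∀ lam, Measurable (V lam) := fun lam =>
    hgcont.measurable.comp (hκm.sub measurable_const)
  have hVbd : ∀ lam σ, |V lam σ| ≤ |κ σ| + (|lam| + B) := by
    intro lam σ
    simp only [hVdef]
    calc |g (κ σ - lam)| ≤ |κ σ - lam| + B := hgbd _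
      _ ≤ |κ σ| + (|lam| + B) := by
          have := abs_sub (κ σ) lam
          linarith [abs_sub_abs_le_abs_sub (κ σ) lam, abs_add_le (κ σ) (-lam), abs_neg lam,
            (by rw [sub_eq_add_neg] : κ σ - lam = κ σ + -lam) ▸ (abs_add_le (κ σ) (-lam))]
  have hVint : ∀ lam, IntegrableOn (V lam) (Icc (0:ℝ) ℓ) volume := by
    intro lam
    refine Integrable.mono' (g := fun σ => |κ σ| + (|lam| + B)) ?_ ?_ ?_
    · exact hκ1.add (hconst _)
    · exact (hVm lam).aestronglyMeasurable
    · exact ae_of_all _ fun σ => by rw [Real.norm_eq_abs]; exact hVbd lam σ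
  have hV2int : ∀ lam, IntegrableOn (fun σ => (V lam σ)^2) (Icc (0:ℝ) ℓ) volume := by
    intro lam
    refine Integrable.mono'
      (g := fun σ => (κ σ)^2 + (2 * (|lam| + B) * |κ σ| + (|lam| + B)^2)) ?_ ?_ ?_
    · exact hκ2.add ((hκ1.const_mul _).add (hconst _))
    · exact ((hVm lam).pow_const 2).aestronglyMeasurable
    · refine ae_of_all _ fun σ => ?_
      rw [Real.norm_eq_abs, abs_of_nonneg (sq_nonneg _)]
      show V lam σ ^ 2 ≤ (κ σ)^2 + (2 * (|lam| + B) * |κ σ| + (|lam| + B)^2)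
      have h := hVbd lam σ
      have key := mul_self_le_mul_self (abs_nonneg (V lam σ)) h
      nlinarith [key, sq_abs (V lam σ), sq_abs (κ σ), abs_nonneg (V lam σ),
        abs_nonneg (κ σ), abs_nonneg lam]
  have hVSint : ∀ lam, IntegrableOn (fun σ => V lam σ * S σ) (Icc (0:ℝ) ℓ) volume := by
    intro lam
    refine Integrable.mono' (g := fun σ => MS * (|κ σ| + (|lam| + B))) ?_ ?_ ?_
    · exact (hκ1.add (hconst _)).const_mul MS
    · exact ((hVm lam).mul hSm).aestronglyMeasurable
    · filter_upwards [hS] with σ hσ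
      rw [Real.norm_eq_abs, abs_mul, abs_of_nonneg (le_trans hω.le hσ.1)]
      calc |V lam σ| * S σ ≤ (|κ σ| + (|lam| + B)) * MS :=
            mul_le_mul (hVbd lam σ) hσ.2 (le_trans hω.le hσ.1)
              (by linarith [abs_nonneg (κ σ), abs_nonneg lam])
        _ = MS * (|κ σ| + (|lam| + B)) := by ring
  set F : ℝ → ℝ := fun lam => ∫ σ in Icc (0:ℝ) ℓ, V lam σ * S σ with hFdef
  have hconstint : ∀ c : ℝ, (∫ _σ in Icc (0:ℝ) ℓ, c ∂volume) = ℓ * c := by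
    intro c
    rw [setIntegral_const, measureReal_def, Real.volume_Icc, sub_zero, ENNReal.toReal_ofReal hℓ.le,
      smul_eq_mul]
  -- monotonicity bounds for F
  have hFmono : ∀ a b : ℝ, a ≤ b →
      (b - a) * (ω * ℓ) / (1 + J) ≤ F a - F b ∧
      F a - F b ≤ (b - a) * (MS * ℓ) / (1 - J) := by
    intro a b hab
    have hdiff : F a - F b = ∫ σ in Icc (0:ℝ) ℓ, (V a σ - V b σ) * S σ := by
      simp only [hFdef]
      rw [← integral_sub (hVSint a) (hVSint b)]
      exact integral_congr_ae (ae_of_all _ fun σ => by ring)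
    have hintd : IntegrableOn (fun σ => (V a σ - V b σ) * S σ) (Icc (0:ℝ) ℓ) volume :=
      ((hVSint a).sub (hVSint b)).congr (ae_of_all _ fun σ => by simp only [Pi.sub_apply]; ring)
    have haein : ∀ᵐ σ ∂(volume.restrict (Icc (0:ℝ) ℓ)),
        (b - a) / (1 + J) * ω ≤ (V a σ - V b σ) * S σ ∧
        (V a σ - V b σ) * S σ ≤ (b - a) / (1 - J) * MS := by
      filter_upwards [hS] with σ hσ
      have hsand := hgsand (κ σ - b) (κ σ - a) (by linarith)
      rw [show κ σ - a - (κ σ - b) = b - a by ring] at hsand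
      have hd0 : 0 ≤ g (κ σ - a) - g (κ σ - b) :=
        le_trans (div_nonneg (by linarith) h1J'.le) hsand.1
      simp only [hVdef]
      constructor
      · calc (b - a) / (1 + J) * ω ≤ (g (κ σ - a) - g (κ σ - b)) * ω :=
              mul_le_mul_of_nonneg_right hsand.1 hω.le
          _ ≤ (g (κ σ - a) - g (κ σ - b)) * S σ :=
              mul_le_mul_of_nonneg_left hσ.1 hd0
      · calc (g (κ σ - a) - g (κ σ - b)) * S σ ≤ (g (κ σ - a) - g (κ σ - b)) * MS :=
              mul_le_mul_of_nonneg_left hσ.2 hd0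
          _ ≤ (b - a) / (1 - J) * MS :=
              mul_le_mul_of_nonneg_right hsand.2 (by linarith)
    constructor
    · rw [hdiff]
      have hlow := integral_mono_ae (integrable_const ((b - a) / (1 + J) * ω)) hintd
        (by filter_upwards [haein] with σ h; exact h.1)
      rw [hconstint] at hlow
      calc (b - a) * (ω * ℓ) / (1 + J) = ℓ * ((b - a) / (1 + J) * ω) := by ring
        _ ≤ _ := hlow
    · rw [hdiff]
      have hup := integral_mono_ae hintd (integrable_const ((b - a) / (1 - J) * MS))
        (by filter_upwards [haein] with σ h; exact h.2)
      rw [hconstint] at hup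
      calc (∫ σ in Icc (0:ℝ) ℓ, (V a σ - V b σ) * S σ)
            ≤ ℓ * ((b - a) / (1 - J) * MS) := hup
        _ = (b - a) * (MS * ℓ) / (1 - J) := by ring
  -- continuity of F
  have hFcont : Continuous F := by
    have hlipF : LipschitzWith (Real.toNNReal (MS * ℓ / (1 - J))) F := by
      apply LipschitzWith.of_dist_le_mul
      intro a b
      rw [Real.dist_eq, Real.dist_eq,
        Real.coe_toNNReal _ (div_pos (mul_pos hMS hℓ) h1J).le]
      rcases le_total a b with h | h
      · obtain ⟨h1, h2⟩ := hFmono a b h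
        have hnn : 0 ≤ F a - F b :=
          le_trans (div_nonneg (mul_nonneg (by linarith) (by positivity)) h1J'.le) h1
        rw [abs_of_nonneg hnn, abs_of_nonpos (by linarith : a - b ≤ 0)]
        calc F a - F b ≤ (b - a) * (MS * ℓ) / (1 - J) := h2
          _ = MS * ℓ / (1 - J) * -(a - b) := by ring
      · obtain ⟨h1, h2⟩ := hFmono b a h
        have hnn : 0 ≤ F b - F a :=
          le_trans (div_nonneg (mul_nonneg (by linarith) (by positivity)) h1J'.le) h1
        rw [abs_sub_comm, abs_of_nonneg hnn,
          abs_of_nonneg (show (0:ℝ) ≤ a - b by linarith)]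
        calc F b - F a ≤ (a - b) * (MS * ℓ) / (1 - J) := h2
          _ = MS * ℓ / (1 - J) * (a - b) := by ring
    exact hlipF.continuous
  -- root of F
  set A : ℝ := (1 + J) * (|F 0| + 1) / (ω * ℓ) with hAdef
  have hApos : 0 < A := by
    apply div_pos (mul_pos h1J' (by positivity)) (mul_pos hω hℓ)
  have hAeq : A * (ω * ℓ) / (1 + J) = |F 0| + 1 := by
    rw [hAdef]
    field_simp
  have hFA : F A < 0 := by
    have h := (hFmono 0 A hApos.le).1
    rw [sub_zero, hAeq] at h
    linarith [le_abs_self (F 0)]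
  have hFnA : 0 < F (-A) := by
    have h := (hFmono (-A) 0 (by linarith)).1
    rw [show (0:ℝ) - (-A) = A by ring, hAeq] at h
    linarith [neg_abs_le (F 0)]
  have hmem : (0:ℝ) ∈ F '' Icc (-A) A :=
    intermediate_value_Icc' (by linarith) hFcont.continuousOn ⟨hFA.le, hFnA.le⟩
  obtain ⟨lam0, _, hlam0⟩ := hmem
  -- uniqueness of root
  have hFinj : ∀ a b : ℝ, F a = 0 → F b = 0 → a = b := by
    intro a b ha hb
    rcases le_total a b with h | h
    · have h1 := (hFmono a b h).1
      rw [ha, hb, sub_zero] at h1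
      have h2 : (b - a) * (ω * ℓ) ≤ 0 := by
        have := (div_le_iff₀ h1J').mp h1
        linarith
      have hpos := mul_pos hω hℓ
      rcases mul_nonpos_iff.mp h2 with ⟨h4, h5⟩ | ⟨h4, h5⟩
      · linarith
      · linarith
    · have h1 := (hFmono b a h).1
      rw [ha, hb, sub_zero] at h1
      have h2 : (a - b) * (ω * ℓ) ≤ 0 := by
        have := (div_le_iff₀ h1J').mp h1
        linarith
      have hpos := mul_pos hω hℓ
      rcases mul_nonpos_iff.mp h2 with ⟨h4, h5⟩ | ⟨h4, h5⟩
      · linarith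
      · linarith
  -- characterization of solutions
  have hchar : ∀ W : ℝ → ℝ, ∀ lam : ℝ, IsSolPair Φ κ S ℓ W lam →
      W =ᵐ[volume.restrict (Icc (0:ℝ) ℓ)] V lam := by
    intro W lam hWp
    obtain ⟨hm, h2, hae, hint⟩ := hWp
    filter_upwards [hae] with σ hσ
    exact huniq (κ σ - lam) (W σ) (V lam σ) (by linarith) (hg (κ σ - lam))
  constructor
  · refine ⟨V lam0, lam0, hVm lam0, hV2int lam0, ae_of_all _ fun σ => ?_, ?_⟩
    · simp only [hVdef]
      have := hg (κ σ - lam0)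
      linarith
    · have h0 : F lam0 = 0 := hlam0
      simp only [hFdef] at h0
      exact h0
  · intro W W' lam lam' hW hW'
    have hWc := hchar W lam hW
    have hWc' := hchar W' lam' hW'
    have hFl : F lam = 0 := by
      have e : (∫ σ in Icc (0:ℝ) ℓ, V lam σ * S σ) = ∫ σ in Icc (0:ℝ) ℓ, W σ * S σ :=
        integral_congr_ae (by filter_upwards [hWc] with σ h; rw [h])
      simp only [hFdef]
      rw [e]
      exact hW.2.2.2
    have hFl' : F lam' = 0 := by
      have e : (∫ σ in Icc (0:ℝ) ℓ, V lam' σ * S σ) = ∫ σ in Icc (0:ℝ) ℓ, W' σ * S σ :=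
        integral_congr_ae (by filter_upwards [hWc'] with σ h; rw [h])
      simp only [hFdef]
      rw [e]
      exact hW'.2.2.2
    have hll : lam' = lam := hFinj lam' lam hFl' hFl
    subst hll
    exact ⟨rfl, hWc'.trans hWc.symm⟩
end

section
/- Let κ : I → ℝ and S : I → ℝ be continuous with S(σ) > 0 for all σ ∈ I, and let Ψ be the inverse of the strictly increasing bijection V ↦ V − Φ(V). Then there exists a unique λ ∈ ℝ such that ∫₀^ℓ Ψ(κ(σ) − λ)·S(σ) dσ = 0. -/
open MeasureTheory Set

/-- for κ, S continuous on I = [0, ℓ] with S > 0, there is a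
unique λ ∈ ℝ such that ∫₀^ℓ Ψ(κ(σ) − λ)·S(σ) dσ = 0, where Ψ is the inverse
of the strictly increasing bijection V ↦ V − Φ(V). -/
theorem stmt2 (Φ : ℝ → ℝ) (J : ℝ) (hJ0 : 0 ≤ J) (hJ1 : J < 1)
    (hΦlip : ∀ a b : ℝ, |Φ a - Φ b| ≤ J * |a - b|)
    (hΦbd : ∃ B : ℝ, ∀ x : ℝ, |Φ x| ≤ B)
    (ℓ : ℝ) (hℓ : 0 < ℓ)
    (κ S : ℝ → ℝ)
    (hκ : ContinuousOn κ (Icc 0 ℓ)) (hS : ContinuousOn S (Icc 0 ℓ))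
    (hSpos : ∀ σ ∈ Icc (0:ℝ) ℓ, 0 < S σ) :
    ∃! lam : ℝ,
      ∫ σ in Icc (0:ℝ) ℓ,
        Function.invFun (fun V : ℝ => V - Φ V) (κ σ - lam) * S σ = 0 := by
  obtain ⟨B, hB⟩ := hΦbd
  have h1J : (0:ℝ) < 1 - J := by linarith
  have h1J' : (0:ℝ) < 1 + J := by linarith
  set F : ℝ → ℝ := fun V => V - Φ V with hF
  have hΦcont : Continuous Φ := by
    have : LipschitzWith (Real.toNNReal J) Φ :=
      LipschitzWith.of_dist_le_mul (fun a b => by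
        rw [Real.dist_eq, Real.dist_eq, Real.coe_toNNReal J hJ0]; exact hΦlip a b)
    exact this.continuous
  have hFcont : Continuous F := by rw [hF]; exact continuous_id.sub hΦcont
  have hFval : ∀ x, F x = x - Φ x := fun x => by rw [hF]
  have hFmono : StrictMono F := by
    intro a b hab
    have h1 : |Φ b - Φ a| ≤ J * |b - a| := hΦlip b a
    rw [abs_of_pos (by linarith : (0:ℝ) < b - a)] at h1
    have h2 := abs_le.1 h1
    rw [hFval a, hFval b]
    nlinarith [h2.1, h2.2]
  have hFsurj : Function.Surjective F := by
    intro y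
    have hB0 := abs_le.1 (hB 0)
    have hBnn : 0 ≤ B := by linarith [abs_nonneg (Φ 0), hB 0]
    have h1 : F (y - B) ≤ y := by
      have := abs_le.1 (hB (y - B)); rw [hFval]; linarith
    have h2 : y ≤ F (y + B) := by
      have := abs_le.1 (hB (y + B)); rw [hFval]; linarith
    have hsub := intermediate_value_Icc (by linarith : y - B ≤ y + B)
      hFcont.continuousOn
    obtain ⟨x, _, hx⟩ := hsub ⟨h1, h2⟩
    exact ⟨x, hx⟩
  set Ψ : ℝ → ℝ := Function.invFun F with hΨ
  have hFΨ : ∀ u, Ψ u - Φ (Ψ u) = u := by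
    intro u
    have : F (Ψ u) = u := Function.invFun_eq (hFsurj u)
    rwa [hFval] at this
  have hkey : ∀ u v : ℝ, u ≤ v → Ψ u ≤ Ψ v ∧
      (1 - J) * (Ψ v - Ψ u) ≤ v - u ∧ v - u ≤ (1 + J) * (Ψ v - Ψ u) := by
    intro u v huv
    have hab : Ψ u ≤ Ψ v := by
      by_contra h
      push_neg at h
      have h2 := hFmono h
      rw [hFval, hFval] at h2
      have e1 := hFΨ u
      have e2 := hFΨ v
      linarith
    have h1 : |Φ (Ψ v) - Φ (Ψ u)| ≤ J * |Ψ v - Ψ u| := hΦlip _ _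
    rw [abs_of_nonneg (by linarith : (0:ℝ) ≤ Ψ v - Ψ u)] at h1
    have h2 := abs_le.1 h1
    have e1 := hFΨ u
    have e2 := hFΨ v
    exact ⟨hab, by nlinarith [h2.1, h2.2], by nlinarith [h2.1, h2.2]⟩
  have hΨlip' : ∀ u v : ℝ, u ≤ v → |Ψ u - Ψ v| ≤ (1 - J)⁻¹ * |u - v| := by
    intro u v huv
    obtain ⟨hm, hlo, _⟩ := hkey u v huv
    rw [abs_sub_comm, abs_of_nonneg (by linarith), abs_sub_comm u v,
      abs_of_nonneg (by linarith), inv_mul_eq_div, le_div_iff₀ h1J]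
    linarith
  have hΨcont : Continuous Ψ := by
    have : LipschitzWith (Real.toNNReal (1 - J)⁻¹) Ψ :=
      LipschitzWith.of_dist_le_mul (fun a b => by
        rw [Real.dist_eq, Real.dist_eq, Real.coe_toNNReal _ (by positivity)]
        rcases le_total a b with h | h
        · exact hΨlip' a b h
        · rw [abs_sub_comm, abs_sub_comm a b]; exact hΨlip' b a h)
    exact this.continuous
  have hint : ∀ lam : ℝ, IntegrableOn (fun σ => Ψ (κ σ - lam) * S σ) (Icc 0 ℓ) := by
    intro lam
    apply ContinuousOn.integrableOn_Icc
    exact (hΨcont.comp_continuousOn (hκ.sub continuousOn_const)).mul hS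
  have hne : (Icc (0:ℝ) ℓ).Nonempty := nonempty_Icc.2 hℓ.le
  obtain ⟨σm, hσm, hσmin⟩ := isCompact_Icc.exists_isMinOn hne hS
  obtain ⟨σM, hσM, hσmax⟩ := isCompact_Icc.exists_isMaxOn hne hS
  set m := S σm with hm'
  set M := S σM with hM'
  have hm : 0 < m := hSpos σm hσm
  have hM : 0 < M := hSpos σM hσM
  have hmle : ∀ σ ∈ Icc (0:ℝ) ℓ, m ≤ S σ := fun σ hσ => hσmin hσ
  have hMle : ∀ σ ∈ Icc (0:ℝ) ℓ, S σ ≤ M := fun σ hσ => hσmax hσ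
  have hconst : ∀ c : ℝ, ∫ _ in Icc (0:ℝ) ℓ, c = ℓ * c := by
    intro c
    rw [setIntegral_const, measureReal_def, Real.volume_Icc, smul_eq_mul,
      ENNReal.toReal_ofReal (by linarith)]
    ring
  have hconstint : ∀ c : ℝ, IntegrableOn (fun _ : ℝ => c) (Icc (0:ℝ) ℓ) := by
    intro c
    exact integrableOn_const (by rw [Real.volume_Icc]; exact ENNReal.ofReal_ne_top)
  set G : ℝ → ℝ := fun lam => ∫ σ in Icc (0:ℝ) ℓ, Ψ (κ σ - lam) * S σ with hG
  have hGval : ∀ lam, G lam = ∫ σ in Icc (0:ℝ) ℓ, Ψ (κ σ - lam) * S σ :=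
    fun lam => by rw [hG]
  have hGdiff : ∀ l1 l2 : ℝ, l1 ≤ l2 →
      ℓ * ((l2 - l1) / (1 + J) * m) ≤ G l1 - G l2 ∧
      G l1 - G l2 ≤ ℓ * ((l2 - l1) / (1 - J) * M) := by
    intro l1 l2 h12
    have hsub : G l1 - G l2 = ∫ σ in Icc (0:ℝ) ℓ,
        (Ψ (κ σ - l1) * S σ - Ψ (κ σ - l2) * S σ) := by
      rw [hGval, hGval]
      exact (integral_sub (hint l1) (hint l2)).symm
    have hptwise : ∀ σ ∈ Icc (0:ℝ) ℓ,
        (l2 - l1) / (1 + J) * m ≤ Ψ (κ σ - l1) * S σ - Ψ (κ σ - l2) * S σ ∧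
        Ψ (κ σ - l1) * S σ - Ψ (κ σ - l2) * S σ ≤ (l2 - l1) / (1 - J) * M := by
      intro σ hσ
      obtain ⟨hmono, hlo, hhi⟩ := hkey (κ σ - l2) (κ σ - l1) (by linarith)
      set d := Ψ (κ σ - l1) - Ψ (κ σ - l2) with hd
      have hd0 : 0 ≤ d := by rw [hd]; linarith
      have hdlo : (l2 - l1) / (1 + J) ≤ d := by
        rw [div_le_iff₀ h1J']; nlinarith
      have hdhi : d ≤ (l2 - l1) / (1 - J) := by
        rw [le_div_iff₀ h1J]; nlinarith
      have hSσ := hmle σ hσ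
      have hSσ' := hMle σ hσ
      constructor
      · calc (l2 - l1) / (1 + J) * m ≤ d * m :=
              mul_le_mul_of_nonneg_right hdlo hm.le
          _ ≤ d * S σ := mul_le_mul_of_nonneg_left hSσ hd0
          _ = Ψ (κ σ - l1) * S σ - Ψ (κ σ - l2) * S σ := by rw [hd]; ring
      · calc Ψ (κ σ - l1) * S σ - Ψ (κ σ - l2) * S σ = d * S σ := by rw [hd]; ring
          _ ≤ ((l2 - l1) / (1 - J)) * M := by
              apply mul_le_mul hdhi hSσ' (le_of_lt (hSpos σ hσ))
              exact div_nonneg (by linarith) h1J.le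
    constructor
    · rw [hsub, ← hconst ((l2 - l1) / (1 + J) * m)]
      exact setIntegral_mono_on (hconstint _) ((hint l1).sub (hint l2))
        measurableSet_Icc (fun σ hσ => (hptwise σ hσ).1)
    · rw [hsub, ← hconst ((l2 - l1) / (1 - J) * M)]
      exact setIntegral_mono_on ((hint l1).sub (hint l2)) (hconstint _)
        measurableSet_Icc (fun σ hσ => (hptwise σ hσ).2)
  have hGcont : Continuous G := by
    have hlip : ∀ a b : ℝ, a ≤ b → |G a - G b| ≤ ℓ * (M / (1 - J)) * |a - b| := by
      intro a b hab
      obtain ⟨h1, h2⟩ := hGdiff a b hab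
      have hnn : 0 ≤ G a - G b :=
        le_trans (mul_nonneg hℓ.le (mul_nonneg (div_nonneg (by linarith) h1J'.le) hm.le)) h1
      rw [abs_of_nonneg hnn, abs_sub_comm, abs_of_nonneg (by linarith)]
      calc G a - G b ≤ ℓ * ((b - a) / (1 - J) * M) := h2
        _ = ℓ * (M / (1 - J)) * (b - a) := by ring
    have : LipschitzWith (Real.toNNReal (ℓ * (M / (1 - J)))) G :=
      LipschitzWith.of_dist_le_mul (fun a b => by
        rw [Real.dist_eq, Real.dist_eq,
          Real.coe_toNNReal _ (mul_nonneg hℓ.le (div_nonneg hM.le h1J.le))]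
        rcases le_total a b with h | h
        · exact hlip a b h
        · rw [abs_sub_comm, abs_sub_comm a b]; exact hlip b a h)
    exact this.continuous
  set c1 : ℝ := ℓ * (m / (1 + J)) with hc1
  have hc1pos : 0 < c1 := by rw [hc1]; positivity
  have hmain : ∃! lam : ℝ, G lam = 0 := by
    have hc1ne : c1 ≠ 0 := ne_of_gt hc1pos
    set a : ℝ := -(|G 0| / c1) with ha
    set b : ℝ := |G 0| / c1 with hb
    have hbnn : 0 ≤ b := by rw [hb]; positivity
    have hab : a ≤ b := by rw [ha]; linarith
    have hkeyval : ℓ * ((|G 0| / c1) / (1 + J) * m) = |G 0| := by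
      rw [hc1]
      field_simp
    have hGa : 0 ≤ G a := by
      have h := (hGdiff a 0 (by rw [ha]; linarith)).1
      rw [show (0 : ℝ) - a = |G 0| / c1 by rw [ha]; ring, hkeyval] at h
      have := neg_abs_le (G 0)
      linarith
    have hGb : G b ≤ 0 := by
      have h := (hGdiff 0 b hbnn).1
      rw [show b - 0 = |G 0| / c1 by rw [hb]; ring, hkeyval] at h
      have := le_abs_self (G 0)
      linarith
    obtain ⟨lam, _, hlam⟩ := intermediate_value_Icc' hab hGcont.continuousOn ⟨hGb, hGa⟩
    refine ⟨lam, hlam, fun y hy => ?_⟩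
    by_contra hne'
    rcases Ne.lt_or_gt hne' with hlt | hlt
    · have h := (hGdiff y lam hlt.le).1
      have hpos : 0 < ℓ * ((lam - y) / (1 + J) * m) :=
        mul_pos hℓ (mul_pos (div_pos (by linarith) h1J') hm)
      rw [hy, hlam] at h
      linarith
    · have h := (hGdiff lam y hlt.le).1
      have hpos : 0 < ℓ * ((y - lam) / (1 + J) * m) :=
        mul_pos hℓ (mul_pos (div_pos (by linarith) h1J') hm)
      rw [hy, hlam] at h
      linarith
  simpa only [hG] using hmain
end

section
/- Suppose V : I → ℝ is measurable, λ ∈ ℝ, V(σ) = κ(σ) + Φ(V(σ)) − λ for almost every σ ∈ I, and ∫_I V·S dσ = 0. Then the a priori estimate (∫_I V² dσ)^{1/2} ≤ (M_S/ω)^{1/2} · ( (∫_I κ² dσ)^{1/2} + ℓ^{1/2}·sup_{x∈ℝ}|Φ(x)| ) holds. -/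
open MeasureTheory Set

private lemma myIntMul {α : Type*} [MeasurableSpace α] {μ : Measure α} {u v : α → ℝ}
    (hu : MemLp u 2 μ) (hv : MemLp v 2 μ) : Integrable (fun x => u x * v x) μ := by
  refine Integrable.mono' ((hu.integrable_sq.add hv.integrable_sq).div_const 2)
    (hu.1.mul hv.1) (Filter.Eventually.of_forall fun x => ?_)
  have h1 := sq_nonneg (u x - v x)
  have h2 := sq_nonneg (u x + v x)
  rw [Real.norm_eq_abs, abs_le]
  constructor <;> (simp only [Pi.add_apply]; nlinarith)

private lemma myCS {α : Type*} [MeasurableSpace α] {μ : Measure α} {u v : α → ℝ}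
    (hu : MemLp u 2 μ) (hv : MemLp v 2 μ) :
    ∫ x, u x * v x ∂μ ≤ Real.sqrt (∫ x, u x ^ 2 ∂μ) * Real.sqrt (∫ x, v x ^ 2 ∂μ) := by
  have h1 : ∫ x, u x * v x ∂μ ≤ ∫ x, ‖u x‖ * ‖v x‖ ∂μ := by
    refine integral_mono_ae (myIntMul hu hv) ?_ (Filter.Eventually.of_forall fun x => ?_)
    · simpa using myIntMul hu.norm hv.norm
    · calc u x * v x ≤ |u x * v x| := le_abs_self _
        _ = ‖u x‖ * ‖v x‖ := by rw [abs_mul]; rfl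
  have h2 := integral_mul_norm_le_Lp_mul_Lq (μ := μ) (p := (2:ℝ)) (q := (2:ℝ))
    (f := u) (g := v) ⟨by norm_num, by norm_num, by norm_num⟩ (by simpa using hu) (by simpa using hv)
  have hnorm : ∀ y : ℝ, ‖y‖ ^ (2:ℝ) = y ^ 2 := fun y => by
    rw [Real.norm_eq_abs, show ((2:ℝ)) = ((2:ℕ):ℝ) by norm_num, Real.rpow_natCast, sq_abs]
  have eu : ∫ x, ‖u x‖ ^ (2:ℝ) ∂μ = ∫ x, u x ^ 2 ∂μ := by
    refine integral_congr_ae (Filter.Eventually.of_forall fun x => ?_)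
    exact hnorm (u x)
  have ev : ∫ x, ‖v x‖ ^ (2:ℝ) ∂μ = ∫ x, v x ^ 2 ∂μ := by
    refine integral_congr_ae (Filter.Eventually.of_forall fun x => ?_)
    exact hnorm (v x)
  rw [eu, ev] at h2
  calc ∫ x, u x * v x ∂μ ≤ ∫ x, ‖u x‖ * ‖v x‖ ∂μ := h1
    _ ≤ (∫ x, u x ^ 2 ∂μ) ^ ((1:ℝ)/2) * (∫ x, v x ^ 2 ∂μ) ^ ((1:ℝ)/2) := h2
    _ = Real.sqrt (∫ x, u x ^ 2 ∂μ) * Real.sqrt (∫ x, v x ^ 2 ∂μ) := by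
        rw [Real.sqrt_eq_rpow, Real.sqrt_eq_rpow]

/-- a priori L² estimate for a solution V of
V = κ + Φ(V) − λ a.e. on I with ∫_I V·S dσ = 0:
‖V‖_{L²} ≤ (M_S/ω)^{1/2}·(‖κ‖_{L²} + ℓ^{1/2}·sup|Φ|). -/
theorem stmt3 (Φ : ℝ → ℝ) (J : ℝ) (hJ0 : 0 ≤ J) (hJ1 : J < 1)
    (hΦlip : ∀ a b : ℝ, |Φ a - Φ b| ≤ J * |a - b|)
    (hΦbd : ∃ B : ℝ, ∀ x : ℝ, |Φ x| ≤ B)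
    (ℓ : ℝ) (hℓ : 0 < ℓ)
    (κ S : ℝ → ℝ) (hκm : Measurable κ)
    (hκ2 : IntegrableOn (fun σ => (κ σ) ^ 2) (Icc 0 ℓ))
    (hSm : Measurable S)
    (ω MS : ℝ) (hω : 0 < ω) (hωMS : ω ≤ MS)
    (hS : ∀ᵐ σ ∂(volume.restrict (Icc (0:ℝ) ℓ)), ω ≤ S σ ∧ S σ ≤ MS)
    (V : ℝ → ℝ) (hVm : Measurable V) (lam : ℝ)
    (heq : ∀ᵐ σ ∂(volume.restrict (Icc (0:ℝ) ℓ)), V σ = κ σ + Φ (V σ) - lam)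
    (hint : ∫ σ in Icc (0:ℝ) ℓ, V σ * S σ = 0) :
    Real.sqrt (∫ σ in Icc (0:ℝ) ℓ, (V σ) ^ 2) ≤
      Real.sqrt (MS / ω) *
        (Real.sqrt (∫ σ in Icc (0:ℝ) ℓ, (κ σ) ^ 2) +
          Real.sqrt ℓ * ⨆ x : ℝ, |Φ x|) := by
  set μ := volume.restrict (Icc (0:ℝ) ℓ) with hμ
  haveI : IsFiniteMeasure μ := by
    constructor
    rw [hμ, Measure.restrict_apply_univ]
    exact measure_Icc_lt_top
  obtain ⟨B0, hB0⟩ := hΦbd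
  have hbdd : BddAbove (Set.range fun x : ℝ => |Φ x|) := ⟨B0, by rintro _ ⟨x, rfl⟩; exact hB0 x⟩
  set B : ℝ := ⨆ x : ℝ, |Φ x| with hBdef
  have hB : ∀ x, |Φ x| ≤ B := fun x => le_ciSup hbdd x
  have hB0' : (0:ℝ) ≤ B := le_trans (abs_nonneg _) (hB 0)
  have hΦc : Continuous Φ := by
    have : LipschitzWith (Real.toNNReal J) Φ := by
      refine LipschitzWith.of_dist_le_mul fun a b => ?_
      rw [Real.dist_eq, Real.dist_eq, Real.coe_toNNReal J hJ0]
      exact hΦlip a b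
    exact this.continuous
  set g : ℝ → ℝ := fun σ => Φ (V σ) with hgdef
  have hgm : Measurable g := hΦc.measurable.comp hVm
  set f : ℝ → ℝ := fun σ => κ σ + g σ with hfdef
  have hfm : Measurable f := hκm.add hgm
  -- MemLp facts
  have mκ : MemLp κ 2 μ := (memLp_two_iff_integrable_sq hκm.aestronglyMeasurable).mpr hκ2
  have mg : MemLp g 2 μ := by
    refine (memLp_top_of_bound hgm.aestronglyMeasurable B
      (Filter.Eventually.of_forall fun x => ?_)).mono_exponent le_top
    simpa [Real.norm_eq_abs] using hB (V x)
  have mf : MemLp f 2 μ := mκ.add mg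
  have hVeq : ∀ᵐ σ ∂μ, V σ = f σ - lam := by
    filter_upwards [heq] with σ h
    simp only [hfdef, hgdef]
    linarith
  have mV : MemLp V 2 μ := (mf.sub (memLp_const lam)).ae_eq (by filter_upwards [hVeq] with σ h; simp [h])
  have hSb : ∀ᵐ σ ∂μ, ‖S σ‖ ≤ MS := by
    filter_upwards [hS] with σ hσ
    rw [Real.norm_eq_abs, abs_le]
    exact ⟨by linarith [hσ.1], hσ.2⟩
  have mS2 : MemLp S 2 μ :=
    (memLp_top_of_bound hSm.aestronglyMeasurable MS hSb).mono_exponent le_top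
  -- sqrt S weighting
  set r : ℝ → ℝ := fun σ => Real.sqrt (S σ) with hrdef
  have hrm : Measurable r := Real.continuous_sqrt.measurable.comp hSm
  have hbnd : ∀ {u : ℝ → ℝ}, MemLp u 2 μ → MemLp (fun σ => u σ * r σ) 2 μ := by
    intro u hu
    refine MemLp.of_le_mul (c := Real.sqrt MS) hu (hu.1.mul hrm.aestronglyMeasurable) ?_
    filter_upwards [hS] with σ hσ
    rw [Real.norm_eq_abs, Real.norm_eq_abs, abs_mul, mul_comm]
    refine mul_le_mul_of_nonneg_right ?_ (abs_nonneg _)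
    rw [abs_of_nonneg (Real.sqrt_nonneg _)]
    exact Real.sqrt_le_sqrt hσ.2
  have mVr : MemLp (fun σ => V σ * r σ) 2 μ := hbnd mV
  have mfr : MemLp (fun σ => f σ * r σ) 2 μ := hbnd mf
  have mfS : MemLp (fun σ => f σ * S σ) 2 μ := by
    refine MemLp.of_le_mul (c := MS) mf (mf.1.mul hSm.aestronglyMeasurable) ?_
    filter_upwards [hSb] with σ hσ
    rw [Real.norm_eq_abs, Real.norm_eq_abs, abs_mul, mul_comm]
    exact mul_le_mul_of_nonneg_right (by rwa [Real.norm_eq_abs] at hσ) (abs_nonneg _)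
  -- integrabilities
  have iV2 : Integrable (fun σ => V σ ^ 2) μ := mV.integrable_sq
  have if2 : Integrable (fun σ => f σ ^ 2) μ := mf.integrable_sq
  have ig2 : Integrable (fun σ => g σ ^ 2) μ := mg.integrable_sq
  have iκg : Integrable (fun σ => κ σ * g σ) μ := myIntMul mκ mg
  have iVr2 : Integrable (fun σ => (V σ * r σ) ^ 2) μ := mVr.integrable_sq
  have ifr2 : Integrable (fun σ => (f σ * r σ) ^ 2) μ := mfr.integrable_sq
  have iVS : Integrable (fun σ => V σ * S σ) μ := myIntMul mV mS2
  have iVfS : Integrable (fun σ => V σ * (f σ * S σ)) μ := myIntMul mV mfS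
  set A : ℝ := ∫ σ, (V σ * r σ) ^ 2 ∂μ with hAdef
  set C : ℝ := ∫ σ, (f σ * r σ) ^ 2 ∂μ with hCdef
  have hA0 : 0 ≤ A := integral_nonneg fun σ => sq_nonneg _
  have hC0 : 0 ≤ C := integral_nonneg fun σ => sq_nonneg _
  -- A = ∫ V f S
  have eA : A = ∫ σ, (V σ * (f σ * S σ) - lam * (V σ * S σ)) ∂μ := by
    refine integral_congr_ae ?_
    filter_upwards [hVeq, hS] with σ hv hσ
    have hr2 : r σ ^ 2 = S σ := Real.sq_sqrt (le_trans hω.le hσ.1)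
    rw [mul_pow, hr2, hv]
    ring
  have eA2 : A = ∫ σ, V σ * (f σ * S σ) ∂μ := by
    rw [eA, integral_sub iVfS (iVS.const_mul lam), integral_const_mul, hint]
    ring
  have eA3 : A = ∫ σ, (V σ * r σ) * (f σ * r σ) ∂μ := by
    rw [eA2]
    refine integral_congr_ae ?_
    filter_upwards [hS] with σ hσ
    have hr2 : r σ * r σ = S σ := Real.mul_self_sqrt (le_trans hω.le hσ.1)
    show V σ * (f σ * S σ) = (V σ * r σ) * (f σ * r σ)
    rw [← hr2]; ring
  have csA : ∫ σ, (V σ * r σ) * (f σ * r σ) ∂μ ≤ Real.sqrt A * Real.sqrt C := myCS mVr mfr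
  have hAC : A ≤ C := by
    rw [← eA3] at csA
    nlinarith [Real.sq_sqrt hA0, Real.sq_sqrt hC0, Real.sqrt_nonneg A, Real.sqrt_nonneg C,
      sq_nonneg (Real.sqrt A - Real.sqrt C)]
  have eAlow : ω * ∫ σ, V σ ^ 2 ∂μ ≤ A := by
    rw [← integral_const_mul]
    refine integral_mono_ae (iV2.const_mul ω) iVr2 ?_
    filter_upwards [hS] with σ hσ
    have hr2 : r σ ^ 2 = S σ := Real.sq_sqrt (le_trans hω.le hσ.1)
    rw [mul_pow, hr2]
    nlinarith [sq_nonneg (V σ), hσ.1]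
  have eCup : C ≤ MS * ∫ σ, f σ ^ 2 ∂μ := by
    rw [← integral_const_mul]
    refine integral_mono_ae ifr2 (if2.const_mul MS) ?_
    filter_upwards [hS] with σ hσ
    have hr2 : r σ ^ 2 = S σ := Real.sq_sqrt (le_trans hω.le hσ.1)
    rw [mul_pow, hr2]
    nlinarith [sq_nonneg (f σ), hσ.2]
  have hV2f2 : ∫ σ, V σ ^ 2 ∂μ ≤ (MS / ω) * ∫ σ, f σ ^ 2 ∂μ := by
    rw [div_mul_eq_mul_div, le_div_iff₀ hω]
    nlinarith [hAC, eAlow, eCup]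
  -- Minkowski part
  set K : ℝ := ∫ σ, κ σ ^ 2 ∂μ with hKdef
  set G : ℝ := ∫ σ, g σ ^ 2 ∂μ with hGdef
  have hK0 : 0 ≤ K := integral_nonneg fun σ => sq_nonneg _
  have hG0 : 0 ≤ G := integral_nonneg fun σ => sq_nonneg _
  have eF : ∫ σ, f σ ^ 2 ∂μ = K + (2 * ∫ σ, κ σ * g σ ∂μ) + G := by
    have : ∫ σ, f σ ^ 2 ∂μ = ∫ σ, (κ σ ^ 2 + (2 * (κ σ * g σ) + g σ ^ 2)) ∂μ := by
      refine integral_congr_ae (Filter.Eventually.of_forall fun σ => ?_)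
      simp only [hfdef]
      ring
    have i2 : Integrable (fun σ => 2 * (κ σ * g σ) + g σ ^ 2) μ :=
      (iκg.const_mul 2).add ig2
    have i3 : Integrable (fun σ => 2 * (κ σ * g σ)) μ := iκg.const_mul 2
    rw [this, integral_add hκ2 i2, integral_add i3 ig2, integral_const_mul]
    ring
  have hκgCS : ∫ σ, κ σ * g σ ∂μ ≤ Real.sqrt K * Real.sqrt G := myCS mκ mg
  have hF2 : ∫ σ, f σ ^ 2 ∂μ ≤ (Real.sqrt K + Real.sqrt G) ^ 2 := by
    rw [eF]
    nlinarith [Real.sq_sqrt hK0, Real.sq_sqrt hG0]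
  have hsF : Real.sqrt (∫ σ, f σ ^ 2 ∂μ) ≤ Real.sqrt K + Real.sqrt G := by
    have h := Real.sqrt_le_sqrt hF2
    rwa [Real.sqrt_sq (by positivity)] at h
  have hμuniv : (μ Set.univ).toReal = ℓ := by
    rw [hμ, Measure.restrict_apply_univ, Real.volume_Icc]
    simp [ENNReal.toReal_ofReal hℓ.le]
  have hGle : G ≤ ℓ * B ^ 2 := by
    have h1 : G ≤ ∫ _σ, B ^ 2 ∂μ := by
      refine integral_mono_ae ig2 (integrable_const _) ?_
      refine Filter.Eventually.of_forall fun σ => ?_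
      have h2 : |g σ| ≤ B := hB (V σ)
      calc g σ ^ 2 = |g σ| ^ 2 := (sq_abs _).symm
        _ ≤ B ^ 2 := pow_le_pow_left₀ (abs_nonneg _) h2 2
    rwa [integral_const, smul_eq_mul, measureReal_def, hμuniv] at h1
  have hsG : Real.sqrt G ≤ Real.sqrt ℓ * B := by
    have h := Real.sqrt_le_sqrt hGle
    rwa [Real.sqrt_mul hℓ.le, Real.sqrt_sq hB0'] at h
  calc Real.sqrt (∫ σ, V σ ^ 2 ∂μ)
      ≤ Real.sqrt ((MS / ω) * ∫ σ, f σ ^ 2 ∂μ) := Real.sqrt_le_sqrt hV2f2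
    _ = Real.sqrt (MS / ω) * Real.sqrt (∫ σ, f σ ^ 2 ∂μ) := Real.sqrt_mul (div_nonneg (hω.le.trans hωMS) hω.le) _
    _ ≤ Real.sqrt (MS / ω) * (Real.sqrt K + Real.sqrt ℓ * B) :=
        mul_le_mul_of_nonneg_left (hsF.trans (by linarith)) (Real.sqrt_nonneg _)
end

section
/- Let κ₁, κ₂ : I → ℝ be measurable and square integrable, and for i = 1, 2 let (V_i, λ_i) satisfy: V_i measurable and square integrable, V_i(σ) = κ_i(σ) + Φ(V_i(σ)) − λ_i almost everywhere on I, and ∫_I V_i·S dσ = 0 (with the same weight S for both). Then ‖V₁ − V₂‖_{L²(I)} ≤ (M_S/ω)^{1/2}·(1 − J)^{−1}·‖κ₁ − κ₂‖_{L²(I)}. In particular, the resolving map κ ↦ V is Lipschitz continuous from L²(I) to L²(I). -/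
open MeasureTheory Set

lemma aux_mul_int {α : Type*} [MeasurableSpace α] {μ : Measure α} {f g : α → ℝ}
    (hf : AEStronglyMeasurable f μ) (hg : AEStronglyMeasurable g μ)
    (hf2 : Integrable (fun x => f x ^ 2) μ) (hg2 : Integrable (fun x => g x ^ 2) μ) :
    Integrable (fun x => f x * g x) μ := by
  refine Integrable.mono' (((hf2.add hg2)).div_const 2) (hf.mul hg) ?_
  refine Filter.Eventually.of_forall fun x => ?_
  simp only [Pi.add_apply]
  rw [Real.norm_eq_abs, abs_mul]
  nlinarith [sq_abs (f x), sq_abs (g x), sq_nonneg (|f x| - |g x|)]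

lemma aux_cs {α : Type*} [MeasurableSpace α] {μ : Measure α} {f g : α → ℝ}
    (hf : AEStronglyMeasurable f μ) (hg : AEStronglyMeasurable g μ)
    (hf2 : Integrable (fun x => f x ^ 2) μ) (hg2 : Integrable (fun x => g x ^ 2) μ) :
    ∫ x, f x * g x ∂μ ≤ Real.sqrt (∫ x, f x ^ 2 ∂μ) * Real.sqrt (∫ x, g x ^ 2 ∂μ) := by
  have hconj : Real.HolderConjugate 2 2 := ⟨by norm_num, by norm_num, by norm_num⟩
  have hfL2 : MemLp f 2 μ := (memLp_two_iff_integrable_sq hf).2 hf2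
  have hgL2 : MemLp g 2 μ := (memLp_two_iff_integrable_sq hg).2 hg2
  have h2 : ENNReal.ofReal (2:ℝ) = 2 := by norm_num
  have key := integral_mul_le_Lp_mul_Lq_of_nonneg hconj
    (f := fun x => |f x|) (g := fun x => |g x|)
    (Filter.Eventually.of_forall fun x => abs_nonneg _)
    (Filter.Eventually.of_forall fun x => abs_nonneg _)
    (by rw [h2]; simpa [Real.norm_eq_abs] using hfL2.norm)
    (by rw [h2]; simpa [Real.norm_eq_abs] using hgL2.norm)
  have hrw : ∀ h : α → ℝ, (∫ x, |h x| ^ (2:ℝ) ∂μ) = ∫ x, h x ^ 2 ∂μ := by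
    intro h
    refine integral_congr_ae (Filter.Eventually.of_forall fun x => ?_)
    simp only []
    rw [show ((2:ℝ):ℝ) = ((2:ℕ):ℝ) by norm_num, Real.rpow_natCast, sq_abs]
  rw [hrw, hrw] at key
  have h1 : ∫ x, f x * g x ∂μ ≤ ∫ x, |f x| * |g x| ∂μ := by
    refine integral_mono (aux_mul_int hf hg hf2 hg2) ?_ fun x => ?_
    · exact aux_mul_int (by simpa [Real.norm_eq_abs] using hf.norm : AEStronglyMeasurable (fun x => |f x|) μ) (by simpa [Real.norm_eq_abs] using hg.norm : AEStronglyMeasurable (fun x => |g x|) μ) (by simpa [sq_abs] using hf2) (by simpa [sq_abs] using hg2)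
    · calc f x * g x ≤ |f x * g x| := le_abs_self _
        _ = |f x| * |g x| := abs_mul _ _
  refine h1.trans (key.trans_eq ?_)
  rw [Real.sqrt_eq_rpow, Real.sqrt_eq_rpow]

/-- Lipschitz continuity of the resolving map κ ↦ V in L²(I):
if (Vᵢ, λᵢ) solves Vᵢ = κᵢ + Φ(Vᵢ) − λᵢ a.e. with ∫ Vᵢ·S = 0 (same weight S),
then ‖V₁ − V₂‖_{L²} ≤ (M_S/ω)^{1/2}·(1 − J)⁻¹·‖κ₁ − κ₂‖_{L²}. -/
theorem stmt4 (Φ : ℝ → ℝ) (J : ℝ) (hJ0 : 0 ≤ J) (hJ1 : J < 1)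
    (hΦlip : ∀ a b : ℝ, |Φ a - Φ b| ≤ J * |a - b|)
    (hΦbd : ∃ B : ℝ, ∀ x : ℝ, |Φ x| ≤ B)
    (ℓ : ℝ) (hℓ : 0 < ℓ)
    (S : ℝ → ℝ) (hSm : Measurable S)
    (ω MS : ℝ) (hω : 0 < ω) (hωMS : ω ≤ MS)
    (hS : ∀ᵐ σ ∂(volume.restrict (Icc (0:ℝ) ℓ)), ω ≤ S σ ∧ S σ ≤ MS)
    (κ₁ κ₂ : ℝ → ℝ) (hκ₁m : Measurable κ₁) (hκ₂m : Measurable κ₂)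
    (hκ₁2 : IntegrableOn (fun σ => (κ₁ σ) ^ 2) (Icc 0 ℓ))
    (hκ₂2 : IntegrableOn (fun σ => (κ₂ σ) ^ 2) (Icc 0 ℓ))
    (V₁ V₂ : ℝ → ℝ) (hV₁m : Measurable V₁) (hV₂m : Measurable V₂)
    (hV₁2 : IntegrableOn (fun σ => (V₁ σ) ^ 2) (Icc 0 ℓ))
    (hV₂2 : IntegrableOn (fun σ => (V₂ σ) ^ 2) (Icc 0 ℓ))
    (lam₁ lam₂ : ℝ)
    (heq₁ : ∀ᵐ σ ∂(volume.restrict (Icc (0:ℝ) ℓ)),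
      V₁ σ = κ₁ σ + Φ (V₁ σ) - lam₁)
    (heq₂ : ∀ᵐ σ ∂(volume.restrict (Icc (0:ℝ) ℓ)),
      V₂ σ = κ₂ σ + Φ (V₂ σ) - lam₂)
    (hint₁ : ∫ σ in Icc (0:ℝ) ℓ, V₁ σ * S σ = 0)
    (hint₂ : ∫ σ in Icc (0:ℝ) ℓ, V₂ σ * S σ = 0) :
    Real.sqrt (∫ σ in Icc (0:ℝ) ℓ, (V₁ σ - V₂ σ) ^ 2) ≤
      Real.sqrt (MS / ω) * (1 - J)⁻¹ *
        Real.sqrt (∫ σ in Icc (0:ℝ) ℓ, (κ₁ σ - κ₂ σ) ^ 2) := by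
  set μ := volume.restrict (Icc (0:ℝ) ℓ) with hμ
  -- continuity of Φ
  have hΦc : Continuous Φ := by
    have : LipschitzWith ⟨J, hJ0⟩ Φ := by
      refine LipschitzWith.of_dist_le_mul fun a b => ?_
      simp only [Real.dist_eq]; exact hΦlip a b
    exact this.continuous
  set W : ℝ → ℝ := fun σ => V₁ σ - V₂ σ with hW
  set k : ℝ → ℝ := fun σ => κ₁ σ - κ₂ σ with hk
  set D : ℝ → ℝ := fun σ => Φ (V₁ σ) - Φ (V₂ σ) with hD
  have hWm : Measurable W := hV₁m.sub hV₂m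
  have hkm : Measurable k := hκ₁m.sub hκ₂m
  have hDm : Measurable D := ((hΦc.measurable.comp hV₁m).sub (hΦc.measurable.comp hV₂m))
  have hDW : ∀ σ, |D σ| ≤ J * |W σ| := fun σ => hΦlip _ _
  haveI : IsFiniteMeasure μ := by
    constructor
    rw [hμ, Measure.restrict_apply_univ]
    exact measure_Icc_lt_top
  -- L² memberships
  have hV₁L2 : MemLp V₁ 2 μ := (memLp_two_iff_integrable_sq hV₁m.aestronglyMeasurable).2 hV₁2
  have hV₂L2 : MemLp V₂ 2 μ := (memLp_two_iff_integrable_sq hV₂m.aestronglyMeasurable).2 hV₂2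
  have hWL2 : MemLp W 2 μ := hV₁L2.sub hV₂L2
  have hkL2 : MemLp k 2 μ :=
    ((memLp_two_iff_integrable_sq hκ₁m.aestronglyMeasurable).2 hκ₁2).sub
      ((memLp_two_iff_integrable_sq hκ₂m.aestronglyMeasurable).2 hκ₂2)
  have hW2int : Integrable (fun σ => W σ ^ 2) μ := hWL2.integrable_sq
  have hk2int : Integrable (fun σ => k σ ^ 2) μ := hkL2.integrable_sq
  have hDL2 : MemLp D 2 μ := by
    refine MemLp.of_le_mul (c := J) hWL2 hDm.aestronglyMeasurable
      (Filter.Eventually.of_forall fun σ => ?_)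
    simpa [Real.norm_eq_abs] using hDW σ
  -- a.e. facts about S
  have hSbd : ∀ᵐ σ ∂μ, ‖S σ‖ ≤ MS := by
    filter_upwards [hS] with σ hσ
    rw [Real.norm_eq_abs, abs_of_nonneg (le_trans hω.le hσ.1)]
    exact hσ.2
  -- integrability of weighted products
  have iW2S : Integrable (fun σ => S σ * W σ ^ 2) μ :=
    hW2int.bdd_mul hSm.aestronglyMeasurable hSbd
  have ik2S : Integrable (fun σ => S σ * k σ ^ 2) μ :=
    hk2int.bdd_mul hSm.aestronglyMeasurable hSbd
  have ikW : Integrable (fun σ => k σ * W σ) μ :=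
    aux_mul_int hkm.aestronglyMeasurable hWm.aestronglyMeasurable hk2int hW2int
  have ikWS : Integrable (fun σ => S σ * (k σ * W σ)) μ :=
    ikW.bdd_mul hSm.aestronglyMeasurable hSbd
  have iDW : Integrable (fun σ => D σ * W σ) μ :=
    aux_mul_int hDm.aestronglyMeasurable hWm.aestronglyMeasurable hDL2.integrable_sq hW2int
  have iDWS : Integrable (fun σ => S σ * (D σ * W σ)) μ :=
    iDW.bdd_mul hSm.aestronglyMeasurable hSbd
  have iV₁S : Integrable (fun σ => S σ * V₁ σ) μ :=
    (hV₁L2.integrable one_le_two).bdd_mul hSm.aestronglyMeasurable hSbd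
  have iV₂S : Integrable (fun σ => S σ * V₂ σ) μ :=
    (hV₂L2.integrable one_le_two).bdd_mul hSm.aestronglyMeasurable hSbd
  have iWS : Integrable (fun σ => S σ * W σ) μ := by
    have : (fun σ => S σ * W σ) = fun σ => S σ * V₁ σ - S σ * V₂ σ := by
      funext σ; simp [hW]; ring
    rw [this]; exact iV₁S.sub iV₂S
  -- ∫ S W = 0
  have hWS0 : ∫ σ, S σ * W σ ∂μ = 0 := by
    have h1 : ∫ σ, S σ * V₁ σ ∂μ = 0 := by
      rw [← hint₁]; exact integral_congr_ae (Filter.Eventually.of_forall fun σ => mul_comm _ _)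
    have h2 : ∫ σ, S σ * V₂ σ ∂μ = 0 := by
      rw [← hint₂]; exact integral_congr_ae (Filter.Eventually.of_forall fun σ => mul_comm _ _)
    have : (fun σ => S σ * W σ) = fun σ => S σ * V₁ σ - S σ * V₂ σ := by
      funext σ; simp [hW]; ring
    rw [this, integral_sub iV₁S iV₂S, h1, h2, sub_zero]
  -- main identity: ∫ S W² = ∫ S k W + ∫ S D W
  have hWeq : ∀ᵐ σ ∂μ, W σ = k σ + D σ - (lam₁ - lam₂) := by
    filter_upwards [heq₁, heq₂] with σ h1 h2
    simp only [hW, hk, hD]; linarith [h1, h2]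
  have hmain : ∫ σ, S σ * W σ ^ 2 ∂μ =
      (∫ σ, S σ * (k σ * W σ) ∂μ) + ∫ σ, S σ * (D σ * W σ) ∂μ := by
    have hae : ∀ᵐ σ ∂μ, S σ * W σ ^ 2 =
        S σ * (k σ * W σ) + S σ * (D σ * W σ) + (-(lam₁ - lam₂)) * (S σ * W σ) := by
      filter_upwards [hWeq] with σ hσ
      calc S σ * W σ ^ 2 = S σ * (W σ * W σ) := by ring
        _ = S σ * ((k σ + D σ - (lam₁ - lam₂)) * W σ) := by rw [← hσ]
        _ = S σ * (k σ * W σ) + S σ * (D σ * W σ) + (-(lam₁ - lam₂)) * (S σ * W σ) := by ring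
    have i1 : Integrable (fun σ => S σ * (k σ * W σ) + S σ * (D σ * W σ)) μ := ikWS.add iDWS
    have i2 : Integrable (fun σ => (-(lam₁ - lam₂)) * (S σ * W σ)) μ := iWS.const_mul _
    rw [integral_congr_ae hae, integral_add i1 i2, integral_add ikWS iDWS,
      integral_const_mul, hWS0, mul_zero, add_zero]
  -- bound ∫ S D W ≤ J ∫ S W²
  have hDWbd : ∫ σ, S σ * (D σ * W σ) ∂μ ≤ J * ∫ σ, S σ * W σ ^ 2 ∂μ := by
    rw [← integral_const_mul]
    refine integral_mono_ae iDWS (iW2S.const_mul J) ?_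
    filter_upwards [hS] with σ hσ
    have hS0 : 0 ≤ S σ := le_trans hω.le hσ.1
    have : D σ * W σ ≤ J * W σ ^ 2 := by
      calc D σ * W σ ≤ |D σ * W σ| := le_abs_self _
        _ = |D σ| * |W σ| := abs_mul _ _
        _ ≤ (J * |W σ|) * |W σ| := by
            exact mul_le_mul_of_nonneg_right (hDW σ) (abs_nonneg _)
        _ = J * W σ ^ 2 := by rw [mul_assoc, ← abs_mul, ← sq, abs_of_nonneg (sq_nonneg _)]
    calc S σ * (D σ * W σ) ≤ S σ * (J * W σ ^ 2) := mul_le_mul_of_nonneg_left this hS0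
      _ = J * (S σ * W σ ^ 2) := by ring
  set A := ∫ σ, S σ * W σ ^ 2 ∂μ with hA
  set C := ∫ σ, S σ * k σ ^ 2 ∂μ with hC
  have hA0 : 0 ≤ A := by
    refine integral_nonneg_of_ae ?_
    filter_upwards [hS] with σ hσ
    exact mul_nonneg (le_trans hω.le hσ.1) (sq_nonneg _)
  have hC0 : 0 ≤ C := by
    refine integral_nonneg_of_ae ?_
    filter_upwards [hS] with σ hσ
    exact mul_nonneg (le_trans hω.le hσ.1) (sq_nonneg _)
  -- Cauchy-Schwarz on ∫ S k W
  have hCS : ∫ σ, S σ * (k σ * W σ) ∂μ ≤ Real.sqrt C * Real.sqrt A := by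
    have hsm : Measurable (fun σ => Real.sqrt (S σ)) := Real.continuous_sqrt.measurable.comp hSm
    have key := aux_cs (f := fun σ => Real.sqrt (S σ) * k σ) (g := fun σ => Real.sqrt (S σ) * W σ)
      ((hsm.mul hkm).aestronglyMeasurable) ((hsm.mul hWm).aestronglyMeasurable)
      (μ := μ) ?_ ?_
    · refine le_trans (le_of_eq (integral_congr_ae ?_)) (key.trans (le_of_eq ?_))
      · filter_upwards [hS] with σ hσ
        have : Real.sqrt (S σ) * Real.sqrt (S σ) = S σ :=
          Real.mul_self_sqrt (le_trans hω.le hσ.1)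
        first
        | linear_combination (k σ * W σ) * this
        | linear_combination (-(k σ * W σ)) * this
      · congr 1
        · rw [hC]
          refine congrArg Real.sqrt (integral_congr_ae ?_)
          filter_upwards [hS] with σ hσ
          have : Real.sqrt (S σ) * Real.sqrt (S σ) = S σ :=
            Real.mul_self_sqrt (le_trans hω.le hσ.1)
          first
          | linear_combination (k σ ^ 2) * this
          | linear_combination (-(k σ ^ 2)) * this
        · rw [hA]
          refine congrArg Real.sqrt (integral_congr_ae ?_)
          filter_upwards [hS] with σ hσ
          have : Real.sqrt (S σ) * Real.sqrt (S σ) = S σ :=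
            Real.mul_self_sqrt (le_trans hω.le hσ.1)
          first
          | linear_combination (W σ ^ 2) * this
          | linear_combination (-(W σ ^ 2)) * this
    · refine (ik2S.congr ?_)
      filter_upwards [hS] with σ hσ
      have : Real.sqrt (S σ) * Real.sqrt (S σ) = S σ :=
        Real.mul_self_sqrt (le_trans hω.le hσ.1)
      first
      | linear_combination (k σ ^ 2) * this
      | linear_combination (-(k σ ^ 2)) * this
    · refine (iW2S.congr ?_)
      filter_upwards [hS] with σ hσ
      have : Real.sqrt (S σ) * Real.sqrt (S σ) = S σ :=
        Real.mul_self_sqrt (le_trans hω.le hσ.1)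
      first
      | linear_combination (W σ ^ 2) * this
      | linear_combination (-(W σ ^ 2)) * this
  -- (1-J) A ≤ √C √A
  have h1J : (0:ℝ) < 1 - J := by linarith
  have hkey : (1 - J) * A ≤ Real.sqrt C * Real.sqrt A := by
    have := hmain
    nlinarith [hDWbd, hCS]
  -- (1-J) √A ≤ √C
  have hsqrtA : (1 - J) * Real.sqrt A ≤ Real.sqrt C := by
    rcases eq_or_lt_of_le hA0 with h | h
    · rw [← h, Real.sqrt_zero, mul_zero]; exact Real.sqrt_nonneg _
    · have hsA : 0 < Real.sqrt A := Real.sqrt_pos.2 h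
      have : (1 - J) * Real.sqrt A * Real.sqrt A ≤ Real.sqrt C * Real.sqrt A := by
        rw [mul_assoc, Real.mul_self_sqrt hA0]
        · exact hkey
      exact le_of_mul_le_mul_right this hsA
  -- ω ∫ W² ≤ A
  have hωA : ω * (∫ σ, W σ ^ 2 ∂μ) ≤ A := by
    rw [← integral_const_mul]
    refine integral_mono_ae (hW2int.const_mul ω) iW2S ?_
    filter_upwards [hS] with σ hσ
    exact mul_le_mul_of_nonneg_right hσ.1 (sq_nonneg _)
  -- C ≤ MS ∫ k²
  have hCMS : C ≤ MS * ∫ σ, k σ ^ 2 ∂μ := by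
    rw [← integral_const_mul]
    refine integral_mono_ae ik2S (hk2int.const_mul MS) ?_
    filter_upwards [hS] with σ hσ
    exact mul_le_mul_of_nonneg_right hσ.2 (sq_nonneg _)
  have hX0 : 0 ≤ ∫ σ, W σ ^ 2 ∂μ := integral_nonneg fun σ => sq_nonneg _
  have hK0 : 0 ≤ ∫ σ, k σ ^ 2 ∂μ := integral_nonneg fun σ => sq_nonneg _
  -- final chain
  have hsω : 0 < Real.sqrt ω := Real.sqrt_pos.2 hω
  have step1 : Real.sqrt (∫ σ, W σ ^ 2 ∂μ) ≤ Real.sqrt A / Real.sqrt ω := by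
    have h1 : (∫ σ, W σ ^ 2 ∂μ) ≤ A / ω := by
      rw [le_div_iff₀ hω]; linarith [hωA]
    calc Real.sqrt (∫ σ, W σ ^ 2 ∂μ) ≤ Real.sqrt (A / ω) := Real.sqrt_le_sqrt h1
      _ = Real.sqrt A / Real.sqrt ω := Real.sqrt_div hA0 ω
  have step2 : Real.sqrt A ≤ Real.sqrt C / (1 - J) := by
    rw [le_div_iff₀ h1J]; linarith [hsqrtA]
  have hMS0 : (0:ℝ) ≤ MS := le_trans hω.le hωMS
  have step3 : Real.sqrt C ≤ Real.sqrt MS * Real.sqrt (∫ σ, k σ ^ 2 ∂μ) := by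
    calc Real.sqrt C ≤ Real.sqrt (MS * ∫ σ, k σ ^ 2 ∂μ) := Real.sqrt_le_sqrt hCMS
      _ = Real.sqrt MS * Real.sqrt (∫ σ, k σ ^ 2 ∂μ) := Real.sqrt_mul hMS0 _
  have final : Real.sqrt (∫ σ, W σ ^ 2 ∂μ) ≤
      Real.sqrt (MS / ω) * (1 - J)⁻¹ * Real.sqrt (∫ σ, k σ ^ 2 ∂μ) := by
    have h2 : Real.sqrt A / Real.sqrt ω ≤ (Real.sqrt C / (1 - J)) / Real.sqrt ω :=
      div_le_div_of_nonneg_right step2 hsω.le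
    have h3 : (Real.sqrt C / (1 - J)) / Real.sqrt ω ≤
        ((Real.sqrt MS * Real.sqrt (∫ σ, k σ ^ 2 ∂μ)) / (1 - J)) / Real.sqrt ω := by
      apply div_le_div_of_nonneg_right _ hsω.le
      exact div_le_div_of_nonneg_right step3 h1J.le
    have heq : ((Real.sqrt MS * Real.sqrt (∫ σ, k σ ^ 2 ∂μ)) / (1 - J)) / Real.sqrt ω =
        Real.sqrt (MS / ω) * (1 - J)⁻¹ * Real.sqrt (∫ σ, k σ ^ 2 ∂μ) := by
      rw [Real.sqrt_div hMS0]; ring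
    calc Real.sqrt (∫ σ, W σ ^ 2 ∂μ) ≤ Real.sqrt A / Real.sqrt ω := step1
      _ ≤ (Real.sqrt C / (1 - J)) / Real.sqrt ω := h2
      _ ≤ ((Real.sqrt MS * Real.sqrt (∫ σ, k σ ^ 2 ∂μ)) / (1 - J)) / Real.sqrt ω := h3
      _ = _ := heq
  exact final
end

section
/- Let κ : I → ℝ be measurable and square integrable, let S₁, S₂ : I → ℝ be measurable with ω ≤ S_i(σ) ≤ M_S almost everywhere (i = 1, 2), and for i = 1, 2 let (V_i, λ_i) satisfy: V_i measurable and square integrable, V_i(σ) = κ(σ) + Φ(V_i(σ)) − λ_i almost everywhere on I, and ∫_I V_i·S_i dσ = 0. Then ‖V₁ − V₂‖_{L²(I)} ≤ ((1 + J)/(ω·(1 − J)))·‖V₂‖_{L²(I)}·ess sup_{σ∈I}|S₁(σ) − S₂(σ)|. -/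
open MeasureTheory Set

private lemma abs_le_half_add_sq (x : ℝ) : |x| ≤ 1/2 + x^2/2 := by
  nlinarith [sq_nonneg (|x| - 1), sq_abs x, abs_nonneg x]

private lemma absIntOn {ℓ : ℝ} {f : ℝ → ℝ} (hm : Measurable f)
    (hf2 : IntegrableOn (fun σ => f σ ^ 2) (Icc (0:ℝ) ℓ)) :
    IntegrableOn (fun σ => |f σ|) (Icc (0:ℝ) ℓ) := by
  have hconst : IntegrableOn (fun _ : ℝ => (1:ℝ)/2) (Icc (0:ℝ) ℓ) :=
    integrableOn_const measure_Icc_lt_top.ne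
  refine Integrable.mono' (hconst.add (hf2.div_const 2)) hm.abs.aestronglyMeasurable ?_
  refine Filter.Eventually.of_forall fun σ => ?_
  rw [Real.norm_eq_abs, abs_abs]
  exact abs_le_half_add_sq (f σ)

private lemma cs_aux {ℓ : ℝ} (hℓ : 0 < ℓ) {f : ℝ → ℝ} (hm : Measurable f)
    (hf2 : IntegrableOn (fun σ => f σ ^ 2) (Icc (0:ℝ) ℓ)) :
    ∫ σ in Icc (0:ℝ) ℓ, |f σ| ≤
      Real.sqrt ℓ * Real.sqrt (∫ σ in Icc (0:ℝ) ℓ, f σ ^ 2) := by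
  have habs := absIntOn hm hf2
  set F : ℝ := ∫ σ in Icc (0:ℝ) ℓ, f σ ^ 2 with hF
  set I : ℝ := ∫ σ in Icc (0:ℝ) ℓ, |f σ| with hIdef
  have hI0 : 0 ≤ I := integral_nonneg fun σ => abs_nonneg _
  set t : ℝ := I / ℓ with ht
  have h0 : (0:ℝ) ≤ ∫ σ in Icc (0:ℝ) ℓ, (|f σ| - t)^2 :=
    integral_nonneg fun σ => sq_nonneg _
  have hconst : IntegrableOn (fun _ : ℝ => t^2) (Icc (0:ℝ) ℓ) :=
    integrableOn_const measure_Icc_lt_top.ne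
  have hμ : (volume (Icc (0:ℝ) ℓ)).toReal = ℓ := by
    rw [Real.volume_Icc, sub_zero, ENNReal.toReal_ofReal hℓ.le]
  have hsplit : ∫ σ in Icc (0:ℝ) ℓ, (|f σ| - t)^2
      = F - 2*t*I + t^2*ℓ := by
    have h1 : ∀ σ : ℝ, (|f σ| - t)^2 = f σ ^2 + ((-(2*t)) * |f σ| + t^2) := by
      intro σ; rw [sub_sq, sq_abs]; ring
    have hg1 : IntegrableOn (fun σ => (-(2*t))*|f σ| + t^2) (Icc (0:ℝ) ℓ) :=
      (habs.const_mul _).add hconst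
    rw [show (fun σ => (|f σ| - t)^2) = fun σ => f σ^2 + ((-(2*t))*|f σ| + t^2)
      from funext h1]
    rw [integral_add hf2 hg1,
      integral_add (habs.const_mul _) hconst, integral_const_mul _ _,
      setIntegral_const, measureReal_def, hμ]
    simp only [smul_eq_mul, ← hF, ← hIdef]
    ring
  have hkey : I^2 ≤ ℓ * F := by
    rw [hsplit] at h0
    have h0' : 0 ≤ ℓ * (F - 2*t*I + t^2*ℓ) := mul_nonneg hℓ.le h0
    have halg : ℓ * (F - 2*t*I + t^2*ℓ) = ℓ * F - I^2 := by
      rw [ht]; field_simp; ring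
    linarith [halg ▸ h0']
  have h2 : I ≤ Real.sqrt (ℓ * F) := (Real.le_sqrt hI0
    (mul_nonneg hℓ.le (integral_nonneg fun σ => sq_nonneg _))).2 hkey
  rwa [Real.sqrt_mul hℓ.le] at h2

/-- Lipschitz continuity of the resolving map with respect to the
weight S: if (Vᵢ, λᵢ) solves Vᵢ = κ + Φ(Vᵢ) − λᵢ a.e. with ∫ Vᵢ·Sᵢ = 0, then
‖V₁ − V₂‖_{L²} ≤ ((1+J)/(ω(1−J)))·‖V₂‖_{L²}·ess sup|S₁ − S₂|, where the
essential supremum bound is expressed by an arbitrary a.e. bound D. -/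
theorem stmt5 (Φ : ℝ → ℝ) (J : ℝ) (hJ0 : 0 ≤ J) (hJ1 : J < 1)
    (hΦlip : ∀ a b : ℝ, |Φ a - Φ b| ≤ J * |a - b|)
    (hΦbd : ∃ B : ℝ, ∀ x : ℝ, |Φ x| ≤ B)
    (ℓ : ℝ) (hℓ : 0 < ℓ)
    (ω MS : ℝ) (hω : 0 < ω) (hωMS : ω ≤ MS)
    (κ : ℝ → ℝ) (hκm : Measurable κ)
    (hκ2 : IntegrableOn (fun σ => (κ σ) ^ 2) (Icc 0 ℓ))
    (S₁ S₂ : ℝ → ℝ) (hS₁m : Measurable S₁) (hS₂m : Measurable S₂)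
    (hS₁ : ∀ᵐ σ ∂(volume.restrict (Icc (0:ℝ) ℓ)), ω ≤ S₁ σ ∧ S₁ σ ≤ MS)
    (hS₂ : ∀ᵐ σ ∂(volume.restrict (Icc (0:ℝ) ℓ)), ω ≤ S₂ σ ∧ S₂ σ ≤ MS)
    (V₁ V₂ : ℝ → ℝ) (hV₁m : Measurable V₁) (hV₂m : Measurable V₂)
    (hV₁2 : IntegrableOn (fun σ => (V₁ σ) ^ 2) (Icc 0 ℓ))
    (hV₂2 : IntegrableOn (fun σ => (V₂ σ) ^ 2) (Icc 0 ℓ))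
    (lam₁ lam₂ : ℝ)
    (heq₁ : ∀ᵐ σ ∂(volume.restrict (Icc (0:ℝ) ℓ)),
      V₁ σ = κ σ + Φ (V₁ σ) - lam₁)
    (heq₂ : ∀ᵐ σ ∂(volume.restrict (Icc (0:ℝ) ℓ)),
      V₂ σ = κ σ + Φ (V₂ σ) - lam₂)
    (hint₁ : ∫ σ in Icc (0:ℝ) ℓ, V₁ σ * S₁ σ = 0)
    (hint₂ : ∫ σ in Icc (0:ℝ) ℓ, V₂ σ * S₂ σ = 0) :
    ∀ D : ℝ, (∀ᵐ σ ∂(volume.restrict (Icc (0:ℝ) ℓ)), |S₁ σ - S₂ σ| ≤ D) →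
      Real.sqrt (∫ σ in Icc (0:ℝ) ℓ, (V₁ σ - V₂ σ) ^ 2) ≤
        ((1 + J) / (ω * (1 - J))) *
          Real.sqrt (∫ σ in Icc (0:ℝ) ℓ, (V₂ σ) ^ 2) * D := by
  intro D hD
  have hMS0 : 0 < MS := lt_of_lt_of_le hω hωMS
  set c : ℝ := lam₁ - lam₂ with hc
  have hWm : Measurable (fun σ => V₁ σ - V₂ σ) := hV₁m.sub hV₂m
  -- square integrability of the difference
  have hW2 : IntegrableOn (fun σ => (V₁ σ - V₂ σ)^2) (Icc (0:ℝ) ℓ) := by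
    have hg : IntegrableOn (fun σ => 2 * V₁ σ ^ 2 + 2 * V₂ σ ^ 2) (Icc (0:ℝ) ℓ) :=
      (hV₁2.const_mul 2).add (hV₂2.const_mul 2)
    refine Integrable.mono' hg ((hWm.pow_const 2).aestronglyMeasurable) ?_
    refine Filter.Eventually.of_forall fun σ => ?_
    rw [Real.norm_eq_abs, abs_of_nonneg (sq_nonneg _)]
    nlinarith [sq_nonneg (V₁ σ + V₂ σ)]
  have habsW : IntegrableOn (fun σ => |V₁ σ - V₂ σ|) (Icc (0:ℝ) ℓ) :=
    absIntOn hWm hW2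
  have habsV₁ : IntegrableOn (fun σ => |V₁ σ|) (Icc (0:ℝ) ℓ) := absIntOn hV₁m hV₁2
  have habsV₂ : IntegrableOn (fun σ => |V₂ σ|) (Icc (0:ℝ) ℓ) := absIntOn hV₂m hV₂2
  -- a.e. pointwise key inequality
  have haeJ : ∀ᵐ σ ∂(volume.restrict (Icc (0:ℝ) ℓ)),
      |(V₁ σ - V₂ σ) + c| ≤ J * |V₁ σ - V₂ σ| := by
    filter_upwards [heq₁, heq₂] with σ h1 h2
    have he : (V₁ σ - V₂ σ) + c = Φ (V₁ σ) - Φ (V₂ σ) := by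
      rw [hc]; linarith
    rw [he]; exact hΦlip _ _
  -- integrability of weighted products
  have hWS₁ : IntegrableOn (fun σ => (V₁ σ - V₂ σ) * S₁ σ) (Icc (0:ℝ) ℓ) := by
    refine Integrable.mono' (habsW.const_mul MS)
      ((hWm.mul hS₁m).aestronglyMeasurable) ?_
    filter_upwards [hS₁] with σ hσ
    rw [Real.norm_eq_abs, abs_mul, abs_of_nonneg (le_trans hω.le hσ.1), mul_comm]
    exact mul_le_mul_of_nonneg_right hσ.2 (abs_nonneg _)
  have hV₁S₁ : IntegrableOn (fun σ => V₁ σ * S₁ σ) (Icc (0:ℝ) ℓ) := by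
    refine Integrable.mono' (habsV₁.const_mul MS)
      ((hV₁m.mul hS₁m).aestronglyMeasurable) ?_
    filter_upwards [hS₁] with σ hσ
    rw [Real.norm_eq_abs, abs_mul, abs_of_nonneg (le_trans hω.le hσ.1), mul_comm]
    exact mul_le_mul_of_nonneg_right hσ.2 (abs_nonneg _)
  have hV₂S₂ : IntegrableOn (fun σ => V₂ σ * S₂ σ) (Icc (0:ℝ) ℓ) := by
    refine Integrable.mono' (habsV₂.const_mul MS)
      ((hV₂m.mul hS₂m).aestronglyMeasurable) ?_
    filter_upwards [hS₂] with σ hσ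
    rw [Real.norm_eq_abs, abs_mul, abs_of_nonneg (le_trans hω.le hσ.1), mul_comm]
    exact mul_le_mul_of_nonneg_right hσ.2 (abs_nonneg _)
  have hV₂dS : IntegrableOn (fun σ => V₂ σ * (S₁ σ - S₂ σ)) (Icc (0:ℝ) ℓ) := by
    refine Integrable.mono' (habsV₂.const_mul (2*MS))
      ((hV₂m.mul (hS₁m.sub hS₂m)).aestronglyMeasurable) ?_
    filter_upwards [hS₁, hS₂] with σ h1 h2
    rw [Real.norm_eq_abs, abs_mul, mul_comm]
    refine mul_le_mul_of_nonneg_right ?_ (abs_nonneg _)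
    rw [abs_sub_le_iff]
    constructor <;> nlinarith [h1.1, h1.2, h2.1, h2.2]
  have hW2S₁ : IntegrableOn (fun σ => (V₁ σ - V₂ σ)^2 * S₁ σ) (Icc (0:ℝ) ℓ) := by
    refine Integrable.mono' (hW2.const_mul MS)
      (((hWm.pow_const 2).mul hS₁m).aestronglyMeasurable) ?_
    filter_upwards [hS₁] with σ hσ
    rw [Real.norm_eq_abs, abs_mul, abs_of_nonneg (sq_nonneg _),
      abs_of_nonneg (le_trans hω.le hσ.1), mul_comm]
    exact mul_le_mul_of_nonneg_right hσ.2 (sq_nonneg _)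
  have hprod : IntegrableOn
      (fun σ => (V₁ σ - V₂ σ) * ((V₁ σ - V₂ σ) + c) * S₁ σ) (Icc (0:ℝ) ℓ) := by
    refine Integrable.mono' (hW2.const_mul (J*MS))
      (((hWm.mul (hWm.add_const c)).mul hS₁m).aestronglyMeasurable) ?_
    filter_upwards [hS₁, haeJ] with σ hσ hj
    rw [Real.norm_eq_abs, abs_mul, abs_mul, abs_of_nonneg (le_trans hω.le hσ.1)]
    calc |V₁ σ - V₂ σ| * |(V₁ σ - V₂ σ) + c| * S₁ σ
        ≤ (|V₁ σ - V₂ σ| * (J * |V₁ σ - V₂ σ|)) * MS := by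
          refine mul_le_mul (mul_le_mul_of_nonneg_left hj (abs_nonneg _)) hσ.2
            (le_trans hω.le hσ.1) ?_
          positivity
      _ = J * MS * (V₁ σ - V₂ σ)^2 := by rw [← sq_abs]; ring
  -- E1: ∫ W S₁ = - ∫ V₂ (S₁ - S₂)
  have hE1 : ∫ σ in Icc (0:ℝ) ℓ, (V₁ σ - V₂ σ) * S₁ σ
      = - ∫ σ in Icc (0:ℝ) ℓ, V₂ σ * (S₁ σ - S₂ σ) := by
    have e1 : (fun σ => (V₁ σ - V₂ σ) * S₁ σ)
        = fun σ => V₁ σ * S₁ σ - (V₂ σ * S₂ σ + V₂ σ * (S₁ σ - S₂ σ)) := by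
      funext σ; ring
    have hadd : IntegrableOn (fun σ => V₂ σ * S₂ σ + V₂ σ * (S₁ σ - S₂ σ))
        (Icc (0:ℝ) ℓ) := hV₂S₂.add hV₂dS
    rw [e1, integral_sub hV₁S₁ hadd, integral_add hV₂S₂ hV₂dS, hint₁, hint₂]
    ring
  -- measure facts; D ≥ 0
  have hμ : (volume (Icc (0:ℝ) ℓ)).toReal = ℓ := by
    rw [Real.volume_Icc, sub_zero, ENNReal.toReal_ofReal hℓ.le]
  have hμne : (volume.restrict (Icc (0:ℝ) ℓ)) ≠ 0 := by
    rw [Ne, Measure.restrict_eq_zero, Real.volume_Icc, sub_zero,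
      ENNReal.ofReal_eq_zero]
    intro h; linarith
  haveI : Filter.NeBot (ae (volume.restrict (Icc (0:ℝ) ℓ))) := ae_neBot.2 hμne
  obtain ⟨σ₀, hσ₀⟩ := hD.exists
  have hD0 : 0 ≤ D := le_trans (abs_nonneg _) hσ₀
  -- abbreviations
  set A2 : ℝ := ∫ σ in Icc (0:ℝ) ℓ, (V₁ σ - V₂ σ)^2 with hA2def
  set B2 : ℝ := ∫ σ in Icc (0:ℝ) ℓ, (V₂ σ)^2 with hB2def
  set IW : ℝ := ∫ σ in Icc (0:ℝ) ℓ, |V₁ σ - V₂ σ| with hIWdef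
  set IV : ℝ := ∫ σ in Icc (0:ℝ) ℓ, |V₂ σ| with hIVdef
  set A : ℝ := Real.sqrt A2 with hAdef
  set B : ℝ := Real.sqrt B2 with hBdef
  have hA2nn : 0 ≤ A2 := integral_nonneg fun σ => sq_nonneg _
  have hB2nn : 0 ≤ B2 := integral_nonneg fun σ => sq_nonneg _
  have hIV0 : 0 ≤ IV := integral_nonneg fun σ => abs_nonneg _
  -- E2 : |∫ V₂ dS| ≤ D * IV
  have hE2 : |(∫ σ in Icc (0:ℝ) ℓ, V₂ σ * (S₁ σ - S₂ σ))| ≤ D * IV := by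
    have h1 : |(∫ σ in Icc (0:ℝ) ℓ, V₂ σ * (S₁ σ - S₂ σ))|
        ≤ ∫ σ in Icc (0:ℝ) ℓ, |V₂ σ * (S₁ σ - S₂ σ)| := by
      have := norm_integral_le_integral_norm (μ := volume.restrict (Icc (0:ℝ) ℓ))
          (fun σ => V₂ σ * (S₁ σ - S₂ σ))
      simp only [Real.norm_eq_abs] at this
      exact this
    have h2 : ∫ σ in Icc (0:ℝ) ℓ, |V₂ σ * (S₁ σ - S₂ σ)|
        ≤ ∫ σ in Icc (0:ℝ) ℓ, D * |V₂ σ| := by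
      refine integral_mono_ae hV₂dS.abs (habsV₂.const_mul D) ?_
      filter_upwards [hD] with σ hσ
      rw [abs_mul, mul_comm D]
      exact mul_le_mul_of_nonneg_left hσ (abs_nonneg _)
    rw [integral_const_mul _ _] at h2
    exact le_trans h1 h2
  -- E3 : (1 - J) ∫ W² S₁ ≤ |c| * (D * IV)
  have hE3a : ∫ σ in Icc (0:ℝ) ℓ, (V₁ σ - V₂ σ)^2 * S₁ σ
      = (∫ σ in Icc (0:ℝ) ℓ, (V₁ σ - V₂ σ) * ((V₁ σ - V₂ σ) + c) * S₁ σ)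
        - c * ∫ σ in Icc (0:ℝ) ℓ, (V₁ σ - V₂ σ) * S₁ σ := by
    have e2 : (fun σ => (V₁ σ - V₂ σ)^2 * S₁ σ)
        = fun σ => (V₁ σ - V₂ σ) * ((V₁ σ - V₂ σ) + c) * S₁ σ
            - c * ((V₁ σ - V₂ σ) * S₁ σ) := by
      funext σ; ring
    rw [e2, integral_sub hprod (hWS₁.const_mul c), integral_const_mul _ _]
  have hE3b : ∫ σ in Icc (0:ℝ) ℓ, (V₁ σ - V₂ σ) * ((V₁ σ - V₂ σ) + c) * S₁ σ
      ≤ J * ∫ σ in Icc (0:ℝ) ℓ, (V₁ σ - V₂ σ)^2 * S₁ σ := by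
    rw [← integral_const_mul]
    refine integral_mono_ae hprod (hW2S₁.const_mul J) ?_
    filter_upwards [hS₁, haeJ] with σ hσ hj
    have hS0 : 0 ≤ S₁ σ := le_trans hω.le hσ.1
    have h1 : (V₁ σ - V₂ σ) * ((V₁ σ - V₂ σ) + c) ≤ J * (V₁ σ - V₂ σ)^2 := by
      calc (V₁ σ - V₂ σ) * ((V₁ σ - V₂ σ) + c)
          ≤ |(V₁ σ - V₂ σ) * ((V₁ σ - V₂ σ) + c)| := le_abs_self _
        _ = |V₁ σ - V₂ σ| * |(V₁ σ - V₂ σ) + c| := abs_mul _ _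
        _ ≤ |V₁ σ - V₂ σ| * (J * |V₁ σ - V₂ σ|) :=
            mul_le_mul_of_nonneg_left hj (abs_nonneg _)
        _ = J * (V₁ σ - V₂ σ)^2 := by rw [← sq_abs]; ring
    calc (V₁ σ - V₂ σ) * ((V₁ σ - V₂ σ) + c) * S₁ σ
        ≤ (J * (V₁ σ - V₂ σ)^2) * S₁ σ := mul_le_mul_of_nonneg_right h1 hS0
      _ = J * ((V₁ σ - V₂ σ)^2 * S₁ σ) := by ring
  have hE3 : (1 - J) * ∫ σ in Icc (0:ℝ) ℓ, (V₁ σ - V₂ σ)^2 * S₁ σ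
      ≤ |c| * (D * IV) := by
    have h1 : - (c * ∫ σ in Icc (0:ℝ) ℓ, (V₁ σ - V₂ σ) * S₁ σ)
        ≤ |c| * (D * IV) := by
      rw [hE1]
      calc -(c * -∫ σ in Icc (0:ℝ) ℓ, V₂ σ * (S₁ σ - S₂ σ))
          = c * ∫ σ in Icc (0:ℝ) ℓ, V₂ σ * (S₁ σ - S₂ σ) := by ring
        _ ≤ |c * (∫ σ in Icc (0:ℝ) ℓ, V₂ σ * (S₁ σ - S₂ σ))| := le_abs_self _
        _ = |c| * |(∫ σ in Icc (0:ℝ) ℓ, V₂ σ * (S₁ σ - S₂ σ))| := abs_mul _ _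
        _ ≤ |c| * (D * IV) := mul_le_mul_of_nonneg_left hE2 (abs_nonneg _)
    linarith [hE3a, hE3b]
  -- E4 : ω * A2 ≤ ∫ W² S₁
  have hE4 : ω * A2 ≤ ∫ σ in Icc (0:ℝ) ℓ, (V₁ σ - V₂ σ)^2 * S₁ σ := by
    rw [hA2def, ← integral_const_mul _ _]
    refine integral_mono_ae (hW2.const_mul ω) hW2S₁ ?_
    filter_upwards [hS₁] with σ hσ
    calc ω * (V₁ σ - V₂ σ)^2 ≤ S₁ σ * (V₁ σ - V₂ σ)^2 :=
        mul_le_mul_of_nonneg_right hσ.1 (sq_nonneg _)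
      _ = (V₁ σ - V₂ σ)^2 * S₁ σ := mul_comm _ _
  -- E5 : |c| * ℓ ≤ (1 + J) * IW
  have hE5 : |c| * ℓ ≤ (1 + J) * IW := by
    have hconst : IntegrableOn (fun _ : ℝ => |c|) (Icc (0:ℝ) ℓ) :=
      integrableOn_const measure_Icc_lt_top.ne
    have h1 : ∫ σ in Icc (0:ℝ) ℓ, |c|
        ≤ ∫ σ in Icc (0:ℝ) ℓ, (1 + J) * |V₁ σ - V₂ σ| := by
      refine integral_mono_ae hconst (habsW.const_mul (1+J)) ?_
      filter_upwards [haeJ] with σ hj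
      have : |c| ≤ |(V₁ σ - V₂ σ) + c| + |V₁ σ - V₂ σ| := by
        have e : c = ((V₁ σ - V₂ σ) + c) + (-(V₁ σ - V₂ σ)) := by ring
        calc |c| = |((V₁ σ - V₂ σ) + c) + (-(V₁ σ - V₂ σ))| := congrArg abs e
          _ ≤ |(V₁ σ - V₂ σ) + c| + |(-(V₁ σ - V₂ σ))| := abs_add_le _ _
          _ = |(V₁ σ - V₂ σ) + c| + |V₁ σ - V₂ σ| := by rw [abs_neg]
      calc |c| ≤ |(V₁ σ - V₂ σ) + c| + |V₁ σ - V₂ σ| := this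
        _ ≤ J * |V₁ σ - V₂ σ| + |V₁ σ - V₂ σ| := by linarith
        _ = (1 + J) * |V₁ σ - V₂ σ| := by ring
    rw [integral_const_mul _ _, setIntegral_const, measureReal_def, hμ,
      smul_eq_mul, mul_comm ℓ] at h1
    exact h1
  -- Cauchy–Schwarz
  have h3 : IW ≤ Real.sqrt ℓ * A := cs_aux hℓ hWm hW2
  have h4 : IV ≤ Real.sqrt ℓ * B := cs_aux hℓ hV₂m hV₂2
  have hsq : Real.sqrt ℓ * Real.sqrt ℓ = ℓ := Real.mul_self_sqrt hℓ.le
  have hA0 : 0 ≤ A := Real.sqrt_nonneg _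
  have hB0 : 0 ≤ B := Real.sqrt_nonneg _
  -- combine
  have h7 : ω * (1-J) * A2 ≤ |c| * (D * IV) := by
    have := mul_le_mul_of_nonneg_left hE4 (by linarith : (0:ℝ) ≤ 1 - J)
    calc ω * (1-J) * A2 = (1-J) * (ω * A2) := by ring
      _ ≤ (1-J) * ∫ σ in Icc (0:ℝ) ℓ, (V₁ σ - V₂ σ)^2 * S₁ σ := this
      _ ≤ |c| * (D * IV) := hE3
  have h10 : ℓ * (ω*(1-J)*A2) ≤ ((1+J)*IW)*(D*IV) := by
    calc ℓ*(ω*(1-J)*A2) ≤ ℓ * (|c| * (D * IV)) := mul_le_mul_of_nonneg_left h7 hℓ.le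
      _ = (|c| * ℓ) * (D*IV) := by ring
      _ ≤ ((1+J)*IW)*(D*IV) :=
          mul_le_mul_of_nonneg_right hE5 (mul_nonneg hD0 hIV0)
  have h11 : ((1+J)*IW)*(D*IV) ≤ ((1+J)*(Real.sqrt ℓ*A))*(D*(Real.sqrt ℓ*B)) := by
    refine mul_le_mul (mul_le_mul_of_nonneg_left h3 (by linarith))
      (mul_le_mul_of_nonneg_left h4 hD0) (mul_nonneg hD0 hIV0) ?_
    have : 0 ≤ Real.sqrt ℓ * A := mul_nonneg (Real.sqrt_nonneg _) hA0
    nlinarith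
  have h12 : ((1+J)*(Real.sqrt ℓ*A))*(D*(Real.sqrt ℓ*B)) = ℓ*((1+J)*A*D*B) := by
    linear_combination ((1+J)*A*D*B) * hsq
  have h13 : ω*(1-J)*A2 ≤ (1+J)*A*D*B := by
    have := le_of_mul_le_mul_left (by linarith [h10, h11, h12.le] :
      ℓ * (ω*(1-J)*A2) ≤ ℓ*((1+J)*A*D*B)) hℓ
    exact this
  have hA2sq : A^2 = A2 := Real.sq_sqrt hA2nn
  have hden : (0:ℝ) < ω*(1-J) := mul_pos hω (by linarith)
  -- conclude
  show A ≤ ((1 + J) / (ω * (1 - J))) * B * D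
  rw [div_mul_eq_mul_div, div_mul_eq_mul_div, le_div_iff₀ hden]
  rcases eq_or_lt_of_le hA0 with hA | hA
  · rw [← hA, zero_mul]
    have h1 : (0:ℝ) ≤ 1 + J := by linarith
    exact mul_nonneg (mul_nonneg h1 hB0) hD0
  · have h14 : (A*(ω*(1-J)))*A ≤ ((1+J)*B*D)*A := by
      calc (A*(ω*(1-J)))*A = ω*(1-J)*A^2 := by ring
        _ = ω*(1-J)*A2 := by rw [hA2sq]
        _ ≤ (1+J)*A*D*B := h13
        _ = ((1+J)*B*D)*A := by ring
    exact le_of_mul_le_mul_right h14 hA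
end

section
/- For every μ > 0 there exist constants C₂ ≥ 0 and C₃ ≥ 0, depending only on μ, ℓ, δ₀ and κ₀ (and not on u), such that for every three times continuously differentiable ℓ-periodic function u : ℝ → ℝ with |u(σ)| ≤ δ₀ for all σ, one has ∫₀^ℓ u″(σ)⁴ / S(σ)⁴ dσ ≤ μ·∫₀^ℓ u‴(σ)² / S(σ)² dσ + C₂·( ∫₀^ℓ u″(σ)² dσ )³ + C₃, where S(σ) := √( u′(σ)² + (1 − u(σ)·κ₀(σ))² ). -/
open MeasureTheory Set intervalIntegral

/-- The metric factor S(σ) = √(u′(σ)² + (1 − u(σ)·κ₀(σ))²). -/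
noncomputable def Sfun (κ₀ u : ℝ → ℝ) (σ : ℝ) : ℝ :=
  Real.sqrt ((deriv u σ) ^ 2 + (1 - u σ * κ₀ σ) ^ 2)


private lemma young_sqrt {p q x : ℝ} (hp : 0 ≤ p) (hq : 0 ≤ q)
    (H : ∀ t : ℝ, 0 < t → x ≤ (t * p + q / t) / 2) :
    x ≤ Real.sqrt p * Real.sqrt q := by
  rcases hp.eq_or_lt with hp0 | hp0
  · rw [← hp0, Real.sqrt_zero, zero_mul]
    by_contra hx
    push_neg at hx
    have ht : (0:ℝ) < (q + 1) / x := by positivity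
    have h1 := H _ ht
    rw [← hp0] at h1
    have h2 : q / ((q + 1) / x) = q * x / (q + 1) := by
      field_simp
    rw [mul_zero, zero_add, h2] at h1
    have h3 : q * x / (q + 1) < x * 2 := by
      rw [div_lt_iff₀ (by positivity)]
      nlinarith
    linarith
  rcases hq.eq_or_lt with hq0 | hq0
  · rw [← hq0, Real.sqrt_zero, mul_zero]
    by_contra hx
    push_neg at hx
    have ht : (0:ℝ) < x / (p + 1) := by positivity
    have h1 := H _ ht
    rw [← hq0] at h1
    rw [zero_div, add_zero] at h1
    have h3 : x / (p + 1) * p < x * 2 := by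
      rw [div_mul_eq_mul_div, div_lt_iff₀ (by positivity : (0:ℝ) < p + 1)]
      nlinarith
    linarith
  · have hsp : 0 < Real.sqrt p := Real.sqrt_pos.2 hp0
    have hsq : 0 < Real.sqrt q := Real.sqrt_pos.2 hq0
    have ht : 0 < Real.sqrt q / Real.sqrt p := by positivity
    have hx := H _ ht
    have hp2 : Real.sqrt p ^ 2 = p := Real.sq_sqrt hp
    have hq2 : Real.sqrt q ^ 2 = q := Real.sq_sqrt hq
    have key : (Real.sqrt q / Real.sqrt p * p + q / (Real.sqrt q / Real.sqrt p)) / 2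
        = Real.sqrt p * Real.sqrt q := by
      field_simp
      nlinarith [hp2, hq2]
    linarith [hx, key.le]

private lemma cs_int {a b : ℝ} (hab : a ≤ b) {F G : ℝ → ℝ}
    (hF : Continuous F) (hG : Continuous G) :
    (∫ x in a..b, F x * G x) ≤
      Real.sqrt (∫ x in a..b, F x ^ 2) * Real.sqrt (∫ x in a..b, G x ^ 2) := by
  apply young_sqrt
  · exact intervalIntegral.integral_nonneg hab fun x _ => sq_nonneg _
  · exact intervalIntegral.integral_nonneg hab fun x _ => sq_nonneg _
  intro t ht
  have hpt : ∀ x ∈ Icc a b, F x * G x ≤ (t * F x ^ 2 + G x ^ 2 / t) / 2 := by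
    intro x _
    have e : (t * F x ^ 2 + G x ^ 2 / t) / 2 - F x * G x = (t * F x - G x) ^ 2 / (2 * t) := by
      field_simp
      ring
    nlinarith [div_nonneg (sq_nonneg (t * F x - G x)) (by linarith : (0:ℝ) ≤ 2 * t)]
  calc (∫ x in a..b, F x * G x)
      ≤ ∫ x in a..b, (t * F x ^ 2 + G x ^ 2 / t) / 2 := by
        apply intervalIntegral.integral_mono_on hab ((hF.mul hG).intervalIntegrable _ _)
          (Continuous.intervalIntegrable (by fun_prop) _ _) hpt
    _ = (t * (∫ x in a..b, F x ^ 2) + (∫ x in a..b, G x ^ 2) / t) / 2 := by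
        rw [intervalIntegral.integral_div, intervalIntegral.integral_add
          (f := fun x => t * F x ^ 2) (g := fun x => G x ^ 2 / t)
          ((continuous_const.mul (hF.pow 2)).intervalIntegrable _ _)
          (((hG.pow 2).div_const t).intervalIntegrable _ _),
          intervalIntegral.integral_const_mul, intervalIntegral.integral_div]

private lemma periodic_deriv' {f : ℝ → ℝ} {T : ℝ} (hf : Function.Periodic f T) :
    Function.Periodic (deriv f) T := by
  intro x
  have h : (fun y => f (y + T)) = f := funext hf
  rw [← deriv_comp_add_const, h]

private lemma sup_le_mean_add {ℓ : ℝ} (hℓ : 0 < ℓ) {h h' : ℝ → ℝ}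
    (hd : ∀ x, HasDerivAt h (h' x) x) (hc' : Continuous h')
    (hper : Function.Periodic h ℓ) (hper' : Function.Periodic h' ℓ)
    {σ : ℝ} (hσ : σ ∈ Icc 0 ℓ) :
    h σ ≤ (∫ x in (0:ℝ)..ℓ, h x) / ℓ + ∫ x in (0:ℝ)..ℓ, |h' x| := by
  have hdiff : Differentiable ℝ h := fun x => (hd x).differentiableAt
  have hch : Continuous h := hdiff.continuous
  obtain ⟨σ₀, hσ₀, hmin⟩ :=
    isCompact_Icc.exists_isMinOn (nonempty_Icc.2 hℓ.le) hch.continuousOn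
  have habs : Function.Periodic (fun x => |h' x|) ℓ := fun x => by simp [hper' x]
  have hIabs : ∀ a b : ℝ, IntervalIntegrable (fun x => |h' x|) volume a b :=
    fun a b => hc'.abs.intervalIntegrable a b
  have hmean : h σ₀ * ℓ ≤ ∫ x in (0:ℝ)..ℓ, h x := by
    have h1 := intervalIntegral.integral_mono_on hℓ.le (_root_.intervalIntegrable_const (c := h σ₀) (μ := volume))
      (hch.intervalIntegrable 0 ℓ) (fun x hx => hmin hx)
    simpa [mul_comm] using h1
  have key : ∀ τ : ℝ, σ₀ ≤ τ → τ ≤ σ₀ + ℓ →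
      h τ ≤ h σ₀ + ∫ x in (0:ℝ)..ℓ, |h' x| := by
    intro τ h1 h2
    have hftc : ∫ x in σ₀..τ, h' x = h τ - h σ₀ :=
      intervalIntegral.integral_eq_sub_of_hasDerivAt (fun x _ => hd x)
        (hc'.intervalIntegrable _ _)
    have hb1 : ∫ x in σ₀..τ, h' x ≤ ∫ x in σ₀..τ, |h' x| :=
      intervalIntegral.integral_mono h1 (hc'.intervalIntegrable _ _) (hIabs _ _)
        (fun x => le_abs_self _)
    have hb2 : ∫ x in σ₀..τ, |h' x| ≤ ∫ x in σ₀..(σ₀ + ℓ), |h' x| :=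
      intervalIntegral.integral_mono_interval le_rfl h1 h2
        (Filter.Eventually.of_forall fun x => abs_nonneg _) (hIabs _ _)
    have hb3 : ∫ x in σ₀..(σ₀ + ℓ), |h' x| = ∫ x in (0:ℝ)..ℓ, |h' x| := by
      simpa using habs.intervalIntegral_add_eq σ₀ 0
    linarith
  have hd2 : h σ₀ ≤ (∫ x in (0:ℝ)..ℓ, h x) / ℓ := (le_div_iff₀ hℓ).2 hmean
  rcases le_or_gt σ₀ σ with hcase | hcase
  · have hk := key σ hcase (by linarith [hσ.2, hσ₀.1])
    linarith
  · have hk := key (σ + ℓ) (by linarith [hσ.1, hσ₀.2]) (by linarith [hσ.2])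
    rw [hper σ] at hk
    linarith

set_option maxHeartbeats 4000000 in
/-- interpolation-type inequality. For every μ > 0 there exist
constants C₂, C₃ ≥ 0 (depending only on μ, ℓ, δ₀, κ₀) such that for every C³,
ℓ-periodic u with |u| ≤ δ₀ one has
∫₀^ℓ u″⁴/S⁴ ≤ μ·∫₀^ℓ u‴²/S² + C₂·(∫₀^ℓ u″²)³ + C₃. -/
theorem stmt7 (ℓ : ℝ) (hℓ : 0 < ℓ)
    (κ₀ : ℝ → ℝ) (hκ₀ : ContDiff ℝ 1 κ₀) (hκ₀per : Function.Periodic κ₀ ℓ)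
    (δ₀ : ℝ) (hδ₀ : 0 < δ₀) (hsmall : ∀ σ : ℝ, δ₀ * |κ₀ σ| < 1) :
    ∀ μ : ℝ, 0 < μ →
      ∃ C₂ C₃ : ℝ, 0 ≤ C₂ ∧ 0 ≤ C₃ ∧
        ∀ u : ℝ → ℝ, ContDiff ℝ 3 u → Function.Periodic u ℓ →
          (∀ σ : ℝ, |u σ| ≤ δ₀) →
          (∫ σ in (0:ℝ)..ℓ, (iteratedDeriv 2 u σ) ^ 4 / (Sfun κ₀ u σ) ^ 4) ≤
            μ * (∫ σ in (0:ℝ)..ℓ,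
                  (iteratedDeriv 3 u σ) ^ 2 / (Sfun κ₀ u σ) ^ 2) +
            C₂ * (∫ σ in (0:ℝ)..ℓ, (iteratedDeriv 2 u σ) ^ 2) ^ 3 + C₃ := by
  -- constants from κ₀
  have hκc : Continuous κ₀ := hκ₀.continuous
  obtain ⟨hκd, hk1c⟩ := contDiff_one_iff_deriv.1 hκ₀
  set k1 : ℝ → ℝ := deriv κ₀ with hk1def
  have hk1per : Function.Periodic k1 ℓ := periodic_deriv' hκ₀per
  obtain ⟨σM, hσM, hmaxM⟩ :=
    isCompact_Icc.exists_isMaxOn (nonempty_Icc.2 hℓ.le) (hκc.abs.continuousOn)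
  set M : ℝ := |κ₀ σM| with hMdef
  have hMb : ∀ σ, |κ₀ σ| ≤ M := by
    intro σ
    obtain ⟨y, hy, hyeq⟩ := hκ₀per.exists_mem_Ico hℓ σ 0
    rw [hyeq]
    rw [zero_add] at hy
    exact hmaxM ⟨hy.1, hy.2.le⟩
  have hM0 : 0 ≤ M := abs_nonneg _
  obtain ⟨σN, hσN, hmaxN⟩ :=
    isCompact_Icc.exists_isMaxOn (nonempty_Icc.2 hℓ.le) (hk1c.abs.continuousOn)
  set M' : ℝ := |k1 σN| with hM'def
  have hM'b : ∀ σ, |k1 σ| ≤ M' := by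
    intro σ
    obtain ⟨y, hy, hyeq⟩ := hk1per.exists_mem_Ico hℓ σ 0
    rw [hyeq]
    rw [zero_add] at hy
    exact hmaxN ⟨hy.1, hy.2.le⟩
  have hM'0 : 0 ≤ M' := abs_nonneg _
  set c : ℝ := 1 - δ₀ * M with hcdef
  have hc : 0 < c := by
    have := hsmall σM
    simp only [hcdef, hMdef]
    linarith
  set C₀ : ℝ := 2 * M + 2 * δ₀ * M' / c with hC₀def
  have hC₀ : 0 ≤ C₀ := by positivity
  intro μ hμ
  refine ⟨(4 / μ + 4 + 2 / ℓ + 2 * C₀) / c ^ 6, 2 / ℓ + 2 * C₀, by positivity, by positivity, ?_⟩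
  intro u hu huper hub
  -- derivatives of u
  have hud : Differentiable ℝ u := hu.differentiable (by norm_num)
  set u1 : ℝ → ℝ := deriv u with hu1def
  set f : ℝ → ℝ := iteratedDeriv 2 u with hfdef
  set g : ℝ → ℝ := iteratedDeriv 3 u with hgdef
  have hu1c : Continuous u1 := by
    have h1 := hu.continuous_iteratedDeriv 1 (by norm_num)
    rwa [iteratedDeriv_one] at h1
  have hfc : Continuous f := hu.continuous_iteratedDeriv 2 (by norm_num)
  have hgc : Continuous g := hu.continuous_iteratedDeriv 3 (by norm_num)
  have e2 : deriv u1 = f := by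
    have h := iteratedDeriv_succ (n := 1) (f := u)
    rw [iteratedDeriv_one] at h
    norm_num at h
    rw [hu1def, hfdef, h]
  have e3 : deriv f = g := by
    have h := iteratedDeriv_succ (n := 2) (f := u)
    norm_num at h
    rw [hfdef, hgdef, h]
  have hu1diff : Differentiable ℝ u1 := by
    have h1 := hu.differentiable_iteratedDeriv 1 (by norm_num)
    rwa [iteratedDeriv_one] at h1
  have hfdiff : Differentiable ℝ f := hu.differentiable_iteratedDeriv 2 (by norm_num)
  have huderiv : ∀ x, HasDerivAt u (u1 x) x := fun x => (hud x).hasDerivAt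
  have hu1deriv : ∀ x, HasDerivAt u1 (f x) x := fun x => by
    have := (hu1diff x).hasDerivAt
    rwa [e2] at this
  have hfderiv : ∀ x, HasDerivAt f (g x) x := fun x => by
    have := (hfdiff x).hasDerivAt
    rwa [e3] at this
  have hu1per : Function.Periodic u1 ℓ := periodic_deriv' huper
  have hfper : Function.Periodic f ℓ := by
    have := periodic_deriv' hu1per
    rwa [e2] at this
  have hgper : Function.Periodic g ℓ := by
    have := periodic_deriv' hfper
    rwa [e3] at this
  -- the weight Q = S²
  set Q : ℝ → ℝ := fun x => u1 x ^ 2 + (1 - u x * κ₀ x) ^ 2 with hQdef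
  have hQc : Continuous Q := by
    apply Continuous.add (hu1c.pow 2)
    exact (continuous_const.sub (hu.continuous.mul hκc)).pow 2
  have hQlb : ∀ x, c ^ 2 ≤ Q x := by
    intro x
    have h1 : |u x * κ₀ x| ≤ δ₀ * M := by
      rw [abs_mul]
      exact mul_le_mul (hub x) (hMb x) (abs_nonneg _) hδ₀.le
    have h2 := abs_le.1 h1
    have h3 : c ≤ 1 - u x * κ₀ x := by
      simp only [hcdef]; linarith [h2.2]
    have h4 : c ^ 2 ≤ (1 - u x * κ₀ x) ^ 2 := pow_le_pow_left₀ hc.le h3 2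
    simp only [hQdef]
    linarith only [h4, sq_nonneg (u1 x)]
  have hQpos : ∀ x, 0 < Q x := fun x => lt_of_lt_of_le (by positivity) (hQlb x)
  have hQper : Function.Periodic Q ℓ := fun x => by
    simp only [hQdef, hu1per x, huper x, hκ₀per x]
  set Q' : ℝ → ℝ :=
    fun x => 2 * u1 x * f x - 2 * (1 - u x * κ₀ x) * (u1 x * κ₀ x + u x * k1 x) with hQ'def
  have hκderiv : ∀ x, HasDerivAt κ₀ (k1 x) x := fun x => (hκd x).hasDerivAt
  have hQderiv : ∀ x, HasDerivAt Q (Q' x) x := by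
    intro x
    have h1 : HasDerivAt (fun y => u1 y ^ 2) (2 * u1 x * f x) x := by
      have := (hu1deriv x).fun_pow 2
      simpa using this
    have hm : HasDerivAt (fun y => u y * κ₀ y) (u1 x * κ₀ x + u x * k1 x) x :=
      (huderiv x).mul (hκderiv x)
    have hs : HasDerivAt (fun y => 1 - u y * κ₀ y) (-(u1 x * κ₀ x + u x * k1 x)) x := by
      simpa using (hasDerivAt_const x (1:ℝ)).fun_sub hm
    have h2 : HasDerivAt (fun y => (1 - u y * κ₀ y) ^ 2)
        (2 * (1 - u x * κ₀ x) * (-(u1 x * κ₀ x + u x * k1 x))) x := by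
      have := hs.fun_pow 2
      simpa using this
    have h3 := h1.add h2
    have : HasDerivAt Q (2 * u1 x * f x +
        2 * (1 - u x * κ₀ x) * (-(u1 x * κ₀ x + u x * k1 x))) x := h3
    convert this using 1
    simp only [hQ'def]
    ring
  have hQ'c : Continuous Q' := by
    simp only [hQ'def]
    fun_prop
  have hQ'per : Function.Periodic Q' ℓ := fun x => by
    simp only [hQ'def, hu1per x, huper x, hκ₀per x, hfper x, hk1per x]
  -- h = f²/Q and its derivative
  set h : ℝ → ℝ := fun x => f x ^ 2 / Q x with hhdef
  set h' : ℝ → ℝ :=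
    fun x => (2 * f x * g x * Q x - f x ^ 2 * Q' x) / Q x ^ 2 with hh'def
  have hhderiv : ∀ x, HasDerivAt h (h' x) x := by
    intro x
    have h1 : HasDerivAt (fun y => f y ^ 2) (2 * f x * g x) x := by
      have := (hfderiv x).fun_pow 2
      simpa using this
    exact h1.div (hQderiv x) (hQpos x).ne'
  have hhc : Continuous h := (hfc.pow 2).div hQc fun x => (hQpos x).ne'
  have hh'c : Continuous h' := by
    simp only [hh'def]
    apply Continuous.div (by fun_prop) (hQc.pow 2)
    exact fun x => pow_ne_zero 2 (hQpos x).ne'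
  have hhper : Function.Periodic h ℓ := fun x => by
    simp only [hhdef, hfper x, hQper x]
  have hh'per : Function.Periodic h' ℓ := fun x => by
    simp only [hh'def, hfper x, hgper x, hQper x, hQ'per x]
  have hhnn : ∀ x, 0 ≤ h x := fun x => div_nonneg (sq_nonneg _) (hQpos x).le
  -- relate Sfun to Q
  have hS2 : ∀ x, Sfun κ₀ u x ^ 2 = Q x := by
    intro x
    show Real.sqrt ((deriv u x) ^ 2 + (1 - u x * κ₀ x) ^ 2) ^ 2 = Q x
    rw [Real.sq_sqrt (by positivity)]
  have hS4 : ∀ x, Sfun κ₀ u x ^ 4 = Q x ^ 2 := by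
    intro x
    rw [show (4:ℕ) = 2 * 2 from rfl, pow_mul, hS2 x]
  have hgoal1 : (∫ σ in (0:ℝ)..ℓ, f σ ^ 4 / Sfun κ₀ u σ ^ 4)
      = ∫ σ in (0:ℝ)..ℓ, f σ ^ 4 / Q σ ^ 2 :=
    intervalIntegral.integral_congr fun x _ => by rw [hS4 x]
  have hgoal2 : (∫ σ in (0:ℝ)..ℓ, g σ ^ 2 / Sfun κ₀ u σ ^ 2)
      = ∫ σ in (0:ℝ)..ℓ, g σ ^ 2 / Q σ :=
    intervalIntegral.integral_congr fun x _ => by rw [hS2 x]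
  rw [hgoal1, hgoal2]
  set A : ℝ := ∫ σ in (0:ℝ)..ℓ, f σ ^ 2 with hAdef
  set D : ℝ := ∫ σ in (0:ℝ)..ℓ, g σ ^ 2 / Q σ with hDdef
  set L : ℝ := ∫ σ in (0:ℝ)..ℓ, f σ ^ 4 / Q σ ^ 2 with hLdef
  set E : ℝ := ∫ σ in (0:ℝ)..ℓ, f σ ^ 2 / Q σ with hEdef
  set I : ℝ := ∫ σ in (0:ℝ)..ℓ, |h' σ| with hIdef
  -- continuity helpers
  have hsQc : Continuous (fun x => Real.sqrt (Q x)) := Real.continuous_sqrt.comp hQc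
  have hsQpos : ∀ x, 0 < Real.sqrt (Q x) := fun x => Real.sqrt_pos.2 (hQpos x)
  have hc1 : Continuous (fun x => |f x| / Real.sqrt (Q x)) :=
    hfc.abs.div hsQc fun x => (hsQpos x).ne'
  have hc2 : Continuous (fun x => |g x| / Real.sqrt (Q x)) :=
    hgc.abs.div hsQc fun x => (hsQpos x).ne'
  have hc3 : Continuous (fun x => f x ^ 2 / Q x) := (hfc.pow 2).div hQc fun x => (hQpos x).ne'
  have hc4 : Continuous (fun x => g x ^ 2 / Q x) := (hgc.pow 2).div hQc fun x => (hQpos x).ne'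
  have hc5 : Continuous (fun x => f x ^ 4 / Q x ^ 2) :=
    (hfc.pow 4).div (hQc.pow 2) fun x => pow_ne_zero _ (hQpos x).ne'
  -- nonnegativity of integrals
  have hA0 : 0 ≤ A := intervalIntegral.integral_nonneg hℓ.le fun x _ => sq_nonneg _
  have hE0 : 0 ≤ E := intervalIntegral.integral_nonneg hℓ.le
    fun x _ => div_nonneg (sq_nonneg _) (hQpos x).le
  have hD0 : 0 ≤ D := intervalIntegral.integral_nonneg hℓ.le
    fun x _ => div_nonneg (sq_nonneg _) (hQpos x).le
  have hL0 : 0 ≤ L := intervalIntegral.integral_nonneg hℓ.le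
    fun x _ => div_nonneg (by positivity) (sq_nonneg _)
  -- E ≤ A / c²
  have hEA : E ≤ A / c ^ 2 := by
    have h1 : E ≤ ∫ x in (0:ℝ)..ℓ, f x ^ 2 / c ^ 2 := by
      apply intervalIntegral.integral_mono_on hℓ.le (hc3.intervalIntegrable _ _)
        (((hfc.pow 2).div_const _).intervalIntegrable _ _)
      intro x _
      exact div_le_div_of_nonneg_left (sq_nonneg _) (by positivity) (hQlb x)
    rwa [intervalIntegral.integral_div] at h1
  -- pointwise bound on |h'|
  have hptw : ∀ x, |h' x| ≤
      2 * ((|f x| / Real.sqrt (Q x)) * (|g x| / Real.sqrt (Q x)))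
      + 2 * ((f x ^ 2 / Q x) * (|f x| / Real.sqrt (Q x)))
      + C₀ * (f x ^ 2 / Q x) := by
    intro x
    set s : ℝ := Real.sqrt (Q x) with hsdef
    have hs0 : 0 < s := hsQpos x
    have hs2 : s ^ 2 = Q x := Real.sq_sqrt (hQpos x).le
    have hsc : c ≤ s := by
      rw [hsdef, show c = Real.sqrt (c ^ 2) from (Real.sqrt_sq hc.le).symm]
      exact Real.sqrt_le_sqrt (hQlb x)
    have hu1s : |u1 x| ≤ s := by
      rw [hsdef, ← Real.sqrt_sq_eq_abs]
      apply Real.sqrt_le_sqrt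
      simp only [hQdef]
      linarith only [sq_nonneg (1 - u x * κ₀ x)]
    have hws : |1 - u x * κ₀ x| ≤ s := by
      rw [hsdef, ← Real.sqrt_sq_eq_abs]
      apply Real.sqrt_le_sqrt
      simp only [hQdef]
      linarith only [sq_nonneg (u1 x)]
    have hQ'b : |Q' x| ≤ 2 * s * |f x| + 2 * M * s ^ 2 + 2 * δ₀ * M' * s := by
      have b1 : |2 * u1 x * f x| ≤ 2 * s * |f x| := by
        rw [abs_mul, abs_mul, abs_two]
        have h4 := mul_le_mul_of_nonneg_right hu1s (abs_nonneg (f x))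
        linarith only [h4]
      have b2 : |u1 x * κ₀ x + u x * k1 x| ≤ s * M + δ₀ * M' := by
        refine (abs_add_le _ _).trans ?_
        rw [abs_mul, abs_mul]
        have h5 : |u1 x| * |κ₀ x| ≤ s * M :=
          mul_le_mul hu1s (hMb x) (abs_nonneg _) ((abs_nonneg _).trans hu1s)
        have h6 : |u x| * |k1 x| ≤ δ₀ * M' :=
          mul_le_mul (hub x) (hM'b x) (abs_nonneg _) hδ₀.le
        linarith
      have b3 : |2 * (1 - u x * κ₀ x) * (u1 x * κ₀ x + u x * k1 x)|
          ≤ 2 * s * (s * M + δ₀ * M') := by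
        rw [abs_mul, abs_mul, abs_two]
        have h4 : |1 - u x * κ₀ x| * |u1 x * κ₀ x + u x * k1 x| ≤ s * (s * M + δ₀ * M') :=
          mul_le_mul hws b2 (abs_nonneg _) hs0.le
        linarith only [h4]
      calc |Q' x| = |2 * u1 x * f x - 2 * (1 - u x * κ₀ x) * (u1 x * κ₀ x + u x * k1 x)| := by
            simp only [hQ'def]
        _ ≤ |2 * u1 x * f x| + |2 * (1 - u x * κ₀ x) * (u1 x * κ₀ x + u x * k1 x)| :=
            abs_sub _ _
        _ ≤ 2 * s * |f x| + 2 * s * (s * M + δ₀ * M') := add_le_add b1 b3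
        _ = 2 * s * |f x| + 2 * M * s ^ 2 + 2 * δ₀ * M' * s := by ring
    have hhx : h' x = 2 * f x * g x / Q x - f x ^ 2 * Q' x / Q x ^ 2 := by
      have hQx : Q x ≠ 0 := (hQpos x).ne'
      simp only [hh'def]
      field_simp
    have habs : |h' x| ≤ |2 * f x * g x / Q x| + |f x ^ 2 * Q' x / Q x ^ 2| := by
      rw [hhx]; exact abs_sub _ _
    have hb1 : |2 * f x * g x / Q x| = 2 * ((|f x| / s) * (|g x| / s)) := by
      have hsx : s ≠ 0 := hs0.ne'
      rw [abs_div, abs_mul, abs_mul, abs_two, abs_of_pos (hQpos x), ← hs2]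
      field_simp
    have hb2 : |f x ^ 2 * Q' x / Q x ^ 2| = f x ^ 2 * |Q' x| / Q x ^ 2 := by
      rw [abs_div, abs_mul, abs_pow, sq_abs]
      congr 1
      rw [abs_pow, abs_of_pos (hQpos x)]
    have hb3 : f x ^ 2 * |Q' x| / Q x ^ 2 ≤
        2 * ((f x ^ 2 / Q x) * (|f x| / s)) + 2 * M * (f x ^ 2 / Q x)
          + 2 * δ₀ * M' * ((f x ^ 2 / Q x) * (1 / s)) := by
      have hquot : f x ^ 2 * |Q' x| / Q x ^ 2 ≤
          f x ^ 2 * (2 * s * |f x| + 2 * M * s ^ 2 + 2 * δ₀ * M' * s) / Q x ^ 2 := by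
        gcongr
      have heq : f x ^ 2 * (2 * s * |f x| + 2 * M * s ^ 2 + 2 * δ₀ * M' * s) / Q x ^ 2
          = 2 * ((f x ^ 2 / Q x) * (|f x| / s)) + 2 * M * (f x ^ 2 / Q x)
            + 2 * δ₀ * M' * ((f x ^ 2 / Q x) * (1 / s)) := by
        have hsx : s ≠ 0 := hs0.ne'
        rw [← hs2]
        field_simp
      linarith
    have hb4 : (f x ^ 2 / Q x) * (1 / s) ≤ (f x ^ 2 / Q x) * (1 / c) := by
      apply mul_le_mul_of_nonneg_left _ (div_nonneg (sq_nonneg _) (hQpos x).le)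
      exact one_div_le_one_div_of_le hc hsc
    have hfin : 2 * ((|f x| / s) * (|g x| / s))
        + (2 * ((f x ^ 2 / Q x) * (|f x| / s)) + 2 * M * (f x ^ 2 / Q x)
          + 2 * δ₀ * M' * ((f x ^ 2 / Q x) * (1 / c)))
        = 2 * ((|f x| / s) * (|g x| / s)) + 2 * ((f x ^ 2 / Q x) * (|f x| / s))
          + C₀ * (f x ^ 2 / Q x) := by
      simp only [hC₀def]
      ring
    rw [hb1, hb2] at habs
    have m4 : 2 * δ₀ * M' * ((f x ^ 2 / Q x) * (1 / s))
        ≤ 2 * δ₀ * M' * ((f x ^ 2 / Q x) * (1 / c)) :=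
      mul_le_mul_of_nonneg_left hb4 (by positivity)
    linarith only [habs, hb3, m4, hfin.le]
  -- integral bound on I via Cauchy–Schwarz
  have hcsum : Continuous (fun x =>
      2 * ((|f x| / Real.sqrt (Q x)) * (|g x| / Real.sqrt (Q x)))
      + 2 * ((f x ^ 2 / Q x) * (|f x| / Real.sqrt (Q x)))
      + C₀ * (f x ^ 2 / Q x)) :=
    ((continuous_const.mul (hc1.mul hc2)).add
      (continuous_const.mul (hc3.mul hc1))).add (continuous_const.mul hc3)
  have hIb : I ≤ 2 * (Real.sqrt E * Real.sqrt D) + 2 * (Real.sqrt L * Real.sqrt E) + C₀ * E := by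
    have step1 : I ≤ ∫ x in (0:ℝ)..ℓ,
        (2 * ((|f x| / Real.sqrt (Q x)) * (|g x| / Real.sqrt (Q x)))
          + 2 * ((f x ^ 2 / Q x) * (|f x| / Real.sqrt (Q x)))
          + C₀ * (f x ^ 2 / Q x)) :=
      intervalIntegral.integral_mono_on hℓ.le (hh'c.abs.intervalIntegrable _ _)
        (hcsum.intervalIntegrable _ _) fun x _ => hptw x
    have split : (∫ x in (0:ℝ)..ℓ,
        (2 * ((|f x| / Real.sqrt (Q x)) * (|g x| / Real.sqrt (Q x)))
          + 2 * ((f x ^ 2 / Q x) * (|f x| / Real.sqrt (Q x)))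
          + C₀ * (f x ^ 2 / Q x)))
        = 2 * (∫ x in (0:ℝ)..ℓ, (|f x| / Real.sqrt (Q x)) * (|g x| / Real.sqrt (Q x)))
          + 2 * (∫ x in (0:ℝ)..ℓ, (f x ^ 2 / Q x) * (|f x| / Real.sqrt (Q x)))
          + C₀ * E := by
      rw [intervalIntegral.integral_add
          (f := fun x => 2 * ((|f x| / Real.sqrt (Q x)) * (|g x| / Real.sqrt (Q x)))
            + 2 * ((f x ^ 2 / Q x) * (|f x| / Real.sqrt (Q x))))
          (g := fun x => C₀ * (f x ^ 2 / Q x)) (((continuous_const.mul (hc1.mul hc2)).add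
            (continuous_const.mul (hc3.mul hc1))).intervalIntegrable _ _)
          ((continuous_const.mul hc3).intervalIntegrable _ _),
        intervalIntegral.integral_add
            (f := fun x => 2 * ((|f x| / Real.sqrt (Q x)) * (|g x| / Real.sqrt (Q x))))
            (g := fun x => 2 * ((f x ^ 2 / Q x) * (|f x| / Real.sqrt (Q x))))
            ((continuous_const.mul (hc1.mul hc2)).intervalIntegrable _ _)
          ((continuous_const.mul (hc3.mul hc1)).intervalIntegrable _ _),
        intervalIntegral.integral_const_mul, intervalIntegral.integral_const_mul,
        intervalIntegral.integral_const_mul]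
    have cs1 : (∫ x in (0:ℝ)..ℓ, (|f x| / Real.sqrt (Q x)) * (|g x| / Real.sqrt (Q x)))
        ≤ Real.sqrt E * Real.sqrt D := by
      have hcs := cs_int hℓ.le hc1 hc2
      have e1 : (∫ x in (0:ℝ)..ℓ, (|f x| / Real.sqrt (Q x)) ^ 2) = E :=
        intervalIntegral.integral_congr fun x _ => by
          rw [div_pow, sq_abs, Real.sq_sqrt (hQpos x).le]
      have e2' : (∫ x in (0:ℝ)..ℓ, (|g x| / Real.sqrt (Q x)) ^ 2) = D :=
        intervalIntegral.integral_congr fun x _ => by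
          rw [div_pow, sq_abs, Real.sq_sqrt (hQpos x).le]
      rwa [e1, e2'] at hcs
    have cs2 : (∫ x in (0:ℝ)..ℓ, (f x ^ 2 / Q x) * (|f x| / Real.sqrt (Q x)))
        ≤ Real.sqrt L * Real.sqrt E := by
      have hcs := cs_int hℓ.le hc3 hc1
      have e1 : (∫ x in (0:ℝ)..ℓ, (f x ^ 2 / Q x) ^ 2) = L :=
        intervalIntegral.integral_congr fun x _ => by
          rw [div_pow, ← pow_mul]
      have e2' : (∫ x in (0:ℝ)..ℓ, (|f x| / Real.sqrt (Q x)) ^ 2) = E :=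
        intervalIntegral.integral_congr fun x _ => by
          rw [div_pow, sq_abs, Real.sq_sqrt (hQpos x).le]
      rwa [e1, e2'] at hcs
    rw [split] at step1
    refine step1.trans ?_
    have g1 := mul_le_mul_of_nonneg_left cs1 (by norm_num : (0:ℝ) ≤ 2)
    have g2 := mul_le_mul_of_nonneg_left cs2 (by norm_num : (0:ℝ) ≤ 2)
    exact add_le_add (add_le_add g1 g2) le_rfl
  -- sup bound and L ≤ (E/ℓ + I) E
  have hhE : (∫ x in (0:ℝ)..ℓ, h x) = E := by
    simp only [hhdef, hEdef]
  have hsup : ∀ x ∈ Icc (0:ℝ) ℓ, h x ≤ E / ℓ + I := by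
    intro x hx
    have hs := sup_le_mean_add hℓ hhderiv hh'c hhper hh'per hx
    rw [hhE] at hs
    exact hs
  have hL2 : L = ∫ x in (0:ℝ)..ℓ, h x ^ 2 := by
    apply intervalIntegral.integral_congr
    intro x _
    simp only [hhdef]
    rw [div_pow, ← pow_mul]
  have hB : L ≤ (E / ℓ + I) * E := by
    rw [hL2]
    calc (∫ x in (0:ℝ)..ℓ, h x ^ 2)
        ≤ ∫ x in (0:ℝ)..ℓ, (E / ℓ + I) * h x := by
          apply intervalIntegral.integral_mono_on hℓ.le
            ((hhc.pow 2).intervalIntegrable _ _)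
            ((continuous_const.mul hhc).intervalIntegrable _ _)
          intro x hx
          rw [pow_two]
          exact mul_le_mul_of_nonneg_right (hsup x hx) (hhnn x)
      _ = (E / ℓ + I) * E := by rw [intervalIntegral.integral_const_mul, hhE]
  -- final arithmetic
  set e : ℝ := Real.sqrt E with hedef
  set d : ℝ := Real.sqrt D with hddef
  set l : ℝ := Real.sqrt L with hldef
  have he2 : e ^ 2 = E := Real.sq_sqrt hE0
  have hd2 : d ^ 2 = D := Real.sq_sqrt hD0
  have hl2 : l ^ 2 = L := Real.sq_sqrt hL0
  have he0 : 0 ≤ e := Real.sqrt_nonneg E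
  have hd0 : 0 ≤ d := Real.sqrt_nonneg D
  have hl0 : 0 ≤ l := Real.sqrt_nonneg L
  clear_value e d l I E L D A C₀ c M M'
  have s1 : l ^ 2 ≤ (e ^ 2 / ℓ + (2 * (e * d) + 2 * (l * e) + C₀ * e ^ 2)) * e ^ 2 := by
    rw [he2, hl2]
    exact hB.trans (mul_le_mul_of_nonneg_right (add_le_add_right hIb (E / ℓ)) hE0)
  have s2 : 2 * (l * e) * e ^ 2 ≤ l ^ 2 / 2 + 2 * e ^ 6 := by
    linarith only [sq_nonneg (l - 2 * e ^ 3)]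
  have t1 : l ^ 2 ≤ 2 * e ^ 4 / ℓ + 4 * (e ^ 3 * d) + 4 * e ^ 6 + 2 * C₀ * e ^ 4 := by
    ring_nf at s1 s2 ⊢
    linarith only [s1, s2]
  have t2 : 4 * (e ^ 3 * d) ≤ 4 / μ * e ^ 6 + μ * d ^ 2 := by
    rw [← sub_nonneg]
    have key : 4 / μ * e ^ 6 + μ * d ^ 2 - 4 * (e ^ 3 * d) = (2 * e ^ 3 - μ * d) ^ 2 / μ := by
      field_simp
      ring
    rw [key]
    positivity
  have t3 : e ^ 4 ≤ e ^ 6 + 1 := by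
    linarith only [mul_nonneg (sq_nonneg e) (sq_nonneg (e ^ 2 - 1)), sq_nonneg (e ^ 2 - 1 / 2)]
  have t4 : e ^ 6 ≤ A ^ 3 / c ^ 6 := by
    calc e ^ 6 = E ^ 3 := by rw [← he2]; ring
      _ ≤ (A / c ^ 2) ^ 3 := pow_le_pow_left₀ hE0 hEA 3
      _ = A ^ 3 / c ^ 6 := by rw [div_pow, ← pow_mul]
  have m1 : (2 / ℓ + 2 * C₀) * e ^ 4 ≤ (2 / ℓ + 2 * C₀) * (e ^ 6 + 1) :=
    mul_le_mul_of_nonneg_left t3 (by positivity)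
  have m2 : (4 / μ + 4 + 2 / ℓ + 2 * C₀) * e ^ 6
      ≤ (4 / μ + 4 + 2 / ℓ + 2 * C₀) * (A ^ 3 / c ^ 6) :=
    mul_le_mul_of_nonneg_left t4 (by positivity)
  have hgoal : l ^ 2 ≤ μ * d ^ 2 + (4 / μ + 4 + 2 / ℓ + 2 * C₀) / c ^ 6 * A ^ 3
      + (2 / ℓ + 2 * C₀) := by
    have expand : (4 / μ + 4 + 2 / ℓ + 2 * C₀) / c ^ 6 * A ^ 3
        = (4 / μ + 4 + 2 / ℓ + 2 * C₀) * (A ^ 3 / c ^ 6) := by ring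
    rw [expand]
    ring_nf at t1 t2 m1 m2 ⊢
    linarith only [t1, t2, m1, m2]
  rw [← hl2, ← hd2]
  ring_nf at hgoal ⊢
  linarith only [hgoal]
end

section
/- There exists a constant R ≥ 0, depending only on ℓ, κ₀, δ₀ and Φ (and in particular independent of the solution and of its initial datum), such that for every T > 0 and every classical solution u of the interface equation on I × [0, T] with |u(σ, t)| ≤ δ₀ for all (σ, t), one has |u(σ, t)| ≤ sup_{σ′}|u(σ′, 0)| + R·t for all σ ∈ ℝ and t ∈ [0, T]. -/
open MeasureTheory Set intervalIntegral Real

/-- First spatial derivative u_σ. -/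
noncomputable def uσ (u : ℝ → ℝ → ℝ) (σ t : ℝ) : ℝ := deriv (fun x => u x t) σ

/-- Second spatial derivative u_σσ. -/
noncomputable def uσσ (u : ℝ → ℝ → ℝ) (σ t : ℝ) : ℝ :=
  iteratedDeriv 2 (fun x => u x t) σ

/-- Third spatial derivative u_σσσ. -/
noncomputable def uσσσ (u : ℝ → ℝ → ℝ) (σ t : ℝ) : ℝ :=
  iteratedDeriv 3 (fun x => u x t) σ

/-- Time derivative u_t. -/
noncomputable def ut (u : ℝ → ℝ → ℝ) (σ t : ℝ) : ℝ := deriv (fun s => u σ s) t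

/-- Metric factor S = √(u_σ² + (1 − u·κ₀)²). -/
noncomputable def Sf (κ₀ : ℝ → ℝ) (u : ℝ → ℝ → ℝ) (σ t : ℝ) : ℝ :=
  Real.sqrt ((uσ u σ t) ^ 2 + (1 - u σ t * κ₀ σ) ^ 2)

/-- Normal velocity V = ((1 − u·κ₀)/S)·u_t. -/
noncomputable def Vf (κ₀ : ℝ → ℝ) (u : ℝ → ℝ → ℝ) (σ t : ℝ) : ℝ :=
  ((1 - u σ t * κ₀ σ) / Sf κ₀ u σ t) * ut u σ t

/-- Curvature κ(u) = S⁻³·[(1 − u κ₀)·u_σσ + 2κ₀·u_σ² + κ₀′·u·u_σ + κ₀·(1 − u κ₀)²]. -/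
noncomputable def curv (κ₀ : ℝ → ℝ) (u : ℝ → ℝ → ℝ) (σ t : ℝ) : ℝ :=
  ((1 - u σ t * κ₀ σ) * uσσ u σ t + 2 * κ₀ σ * (uσ u σ t) ^ 2
    + deriv κ₀ σ * u σ t * uσ u σ t + κ₀ σ * (1 - u σ t * κ₀ σ) ^ 2) /
    (Sf κ₀ u σ t) ^ 3

/-- Total length L[u](t) = ∫₀^ℓ S dσ. -/
noncomputable def Lf (ℓ : ℝ) (κ₀ : ℝ → ℝ) (u : ℝ → ℝ → ℝ) (t : ℝ) : ℝ :=
  ∫ σ in (0:ℝ)..ℓ, Sf κ₀ u σ t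

/-- A classical solution of the interface evolution equation on I × [0, T]:
u is ℓ-periodic in σ, has continuous partial derivatives u_t, u_σ, u_σσ,
and satisfies the equation
u_t − (S/(1 − u κ₀))·Φ(V) = (S/(1 − u κ₀))·κ(u)
  − (S/((1 − u κ₀)·L[u]))·(∫₀^ℓ Φ(V)·S dσ + 2π) pointwise. -/
structure IsClassicalSol (ℓ : ℝ) (κ₀ : ℝ → ℝ) (Φ : ℝ → ℝ) (T : ℝ)
    (u : ℝ → ℝ → ℝ) : Prop where
  periodic : ∀ t ∈ Icc (0:ℝ) T, Function.Periodic (fun σ => u σ t) ℓ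
  cont : Continuous fun p : ℝ × ℝ => u p.1 p.2
  smooth_σ : ∀ t ∈ Icc (0:ℝ) T, ContDiff ℝ 2 (fun σ => u σ t)
  diff_t : ∀ σ : ℝ, ∀ t ∈ Icc (0:ℝ) T, DifferentiableAt ℝ (fun s => u σ s) t
  cont_ut : ContinuousOn (fun p : ℝ × ℝ => ut u p.1 p.2) (univ ×ˢ Icc (0:ℝ) T)
  cont_uσ : ContinuousOn (fun p : ℝ × ℝ => uσ u p.1 p.2) (univ ×ˢ Icc (0:ℝ) T)
  cont_uσσ : ContinuousOn (fun p : ℝ × ℝ => uσσ u p.1 p.2) (univ ×ˢ Icc (0:ℝ) T)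
  eqn : ∀ σ : ℝ, ∀ t ∈ Icc (0:ℝ) T,
    ut u σ t - (Sf κ₀ u σ t / (1 - u σ t * κ₀ σ)) * Φ (Vf κ₀ u σ t)
      = (Sf κ₀ u σ t / (1 - u σ t * κ₀ σ)) * curv κ₀ u σ t
        - (Sf κ₀ u σ t / ((1 - u σ t * κ₀ σ) * Lf ℓ κ₀ u t))
          * ((∫ σ' in (0:ℝ)..ℓ, Φ (Vf κ₀ u σ' t) * Sf κ₀ u σ' t) + 2 * π)

open Filter Topology in
private lemma aux_deriv_nonneg_left (h : ℝ → ℝ) (t : ℝ) (ht : 0 < t)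
    (hd : DifferentiableAt ℝ h t) (hmax : ∀ s ∈ Icc 0 t, h s ≤ h t) :
    0 ≤ deriv h t := by
  have hslope : Tendsto (slope h t) (𝓝[≠] t) (𝓝 (deriv h t)) :=
    hasDerivAt_iff_tendsto_slope.mp hd.hasDerivAt
  have hsub : 𝓝[Ioo 0 t] t ≤ 𝓝[≠] t :=
    nhdsWithin_mono _ (fun x hx => ne_of_lt hx.2)
  have hne : (𝓝[Ioo 0 t] t).NeBot :=
    (isLUB_Ioo ht).nhdsWithin_neBot (nonempty_Ioo.mpr ht)
  refine ge_of_tendsto (hslope.mono_left hsub) ?_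
  filter_upwards [self_mem_nhdsWithin] with x hx
  rw [slope_def_field]
  have h1 : h x - h t ≤ 0 := sub_nonpos.mpr (hmax x ⟨le_of_lt hx.1, le_of_lt hx.2⟩)
  have h2 : x - t < 0 := sub_neg.mpr hx.2
  exact div_nonneg_of_nonpos h1 h2.le

open Filter Topology in
private lemma aux_second_deriv_nonpos (f : ℝ → ℝ) (hf : ContDiff ℝ 2 f) (x : ℝ)
    (hmax : IsLocalMax f x) : iteratedDeriv 2 f x ≤ 0 := by
  by_contra hpos
  push_neg at hpos
  have hd1 : Differentiable ℝ f := hf.differentiable (by norm_num)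
  have hf' : ContDiff ℝ ((1:ℕ) + 1) f := by exact_mod_cast hf
  have hd2 : Differentiable ℝ (deriv f) :=
    (contDiff_succ_iff_deriv.mp hf').2.2.differentiable (by simp)
  have hder : HasDerivAt (deriv f) (iteratedDeriv 2 f x) x := by
    rw [iteratedDeriv_succ, iteratedDeriv_one]
    exact (hd2 x).hasDerivAt
  have h0 : deriv f x = 0 := hmax.deriv_eq_zero
  have hslope : Tendsto (slope (deriv f) x) (𝓝[≠] x) (𝓝 (iteratedDeriv 2 f x)) :=
    hasDerivAt_iff_tendsto_slope.mp hder
  have hsub : 𝓝[>] x ≤ 𝓝[≠] x := nhdsWithin_mono _ (fun y hy => ne_of_gt hy)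
  have hev : ∀ᶠ y in 𝓝[>] x, 0 < slope (deriv f) x y :=
    (hslope.mono_left hsub).eventually (eventually_gt_nhds hpos)
  have hev2 : ∀ᶠ y in 𝓝[>] x, 0 < deriv f y := by
    filter_upwards [hev, self_mem_nhdsWithin] with y hy hy'
    rw [slope_def_field, h0, sub_zero] at hy
    have hxy : (0:ℝ) < y - x := sub_pos.mpr hy'
    have := mul_pos hy hxy
    rwa [div_mul_cancel₀] at this
    exact ne_of_gt hxy
  obtain ⟨δ, hδ, hball⟩ := (nhdsGT_basis x).eventually_iff.mp hev2
  obtain ⟨ε, hε, hballmax⟩ := Metric.eventually_nhds_iff.mp hmax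
  set y := (min δ (x + ε) + x) / 2 with hy
  have hxδ : x < min δ (x + ε) := lt_min hδ (by linarith)
  have hxy : x < y := by rw [hy]; linarith
  have hyδ : y < δ := by
    have := min_le_left δ (x + ε); rw [hy]; linarith
  have hyε : y - x < ε := by
    have := min_le_right δ (x + ε); rw [hy]; linarith
  have hmono : StrictMonoOn f (Icc x y) := by
    apply strictMonoOn_of_deriv_pos (convex_Icc x y) (hd1.continuous.continuousOn)
    intro z hz
    rw [interior_Icc] at hz
    exact hball ⟨hz.1, lt_trans hz.2 hyδ⟩
  have hlt : f x < f y := hmono ⟨le_rfl, hxy.le⟩ ⟨hxy.le, le_rfl⟩ hxy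
  have : f y ≤ f x := hballmax (by rw [Real.dist_eq, abs_of_pos (by linarith)]; linarith)
  linarith

private lemma keyA (ℓ δ₀ B K c : ℝ) (κ₀ Φ : ℝ → ℝ) (T : ℝ)
    (hℓ : 0 < ℓ) (hκ₀ : ContDiff ℝ 1 κ₀)
    (hδ₀ : 0 < δ₀)
    (hB : ∀ x : ℝ, |Φ x| ≤ B)
    (hK : ∀ σ : ℝ, |κ₀ σ| ≤ K)
    (hc : c = 1 - δ₀ * K) (hcpos : 0 < c)
    (hΦcont : Continuous Φ)
    (u : ℝ → ℝ → ℝ) (hsol : IsClassicalSol ℓ κ₀ Φ T u)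
    (hbd : ∀ σ : ℝ, ∀ t ∈ Icc (0:ℝ) T, |u σ t| ≤ δ₀)
    (σ t : ℝ) (ht : t ∈ Icc (0:ℝ) T) (h0 : uσ u σ t = 0) :
    |ut u σ t - uσσ u σ t / (1 - u σ t * κ₀ σ)^2| ≤ 2*B + K/c + 2*π/(ℓ*c) := by
  have hKnn : 0 ≤ K := le_trans (abs_nonneg _) (hK 0)
  have hBnn : 0 ≤ B := le_trans (abs_nonneg _) (hB 0)
  have hone : ∀ σ' : ℝ, c ≤ 1 - u σ' t * κ₀ σ' := by
    intro σ'
    have h1 : u σ' t * κ₀ σ' ≤ δ₀ * K := by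
      calc u σ' t * κ₀ σ' ≤ |u σ' t * κ₀ σ'| := le_abs_self _
        _ = |u σ' t| * |κ₀ σ'| := abs_mul _ _
        _ ≤ δ₀ * K := mul_le_mul (hbd σ' t ht) (hK σ') (abs_nonneg _) hδ₀.le
    rw [hc]; linarith
  have hSc : ∀ σ' : ℝ, c ≤ Sf κ₀ u σ' t := by
    intro σ'
    have h1 : (0:ℝ) ≤ 1 - u σ' t * κ₀ σ' := le_trans hcpos.le (hone σ')
    calc c ≤ 1 - u σ' t * κ₀ σ' := hone σ'
      _ = Real.sqrt ((1 - u σ' t * κ₀ σ') ^ 2) := (Real.sqrt_sq h1).symm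
      _ ≤ Sf κ₀ u σ' t := by
          unfold Sf
          exact Real.sqrt_le_sqrt (by nlinarith [sq_nonneg (uσ u σ' t)])
  -- continuity in σ at fixed t
  have hmem : ∀ σ' : ℝ, ((σ', t) : ℝ × ℝ) ∈ (univ ×ˢ Icc (0:ℝ) T) := by
    intro σ'; exact ⟨mem_univ _, ht⟩
  have hmap : Continuous fun σ' : ℝ => ((σ', t) : ℝ × ℝ) :=
    continuous_id.prodMk continuous_const
  have hu_c : Continuous fun σ' => u σ' t :=
    hsol.cont.comp hmap
  have huσ_c : Continuous fun σ' => uσ u σ' t :=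
    hsol.cont_uσ.comp_continuous hmap hmem
  have hut_c : Continuous fun σ' => ut u σ' t :=
    hsol.cont_ut.comp_continuous hmap hmem
  have hS_c : Continuous fun σ' => Sf κ₀ u σ' t := by
    apply Real.continuous_sqrt.comp
    exact (huσ_c.pow 2).add ((continuous_const.sub (hu_c.mul hκ₀.continuous)).pow 2)
  have hSne : ∀ σ' : ℝ, Sf κ₀ u σ' t ≠ 0 := fun σ' => ne_of_gt (lt_of_lt_of_le hcpos (hSc σ'))
  have hV_c : Continuous fun σ' => Vf κ₀ u σ' t := by
    unfold Vf
    exact ((continuous_const.sub (hu_c.mul hκ₀.continuous)).div hS_c hSne).mul hut_c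
  have hSint : IntervalIntegrable (fun σ' => Sf κ₀ u σ' t) MeasureTheory.volume 0 ℓ :=
    hS_c.intervalIntegrable _ _
  have hΦSint : IntervalIntegrable (fun σ' => Φ (Vf κ₀ u σ' t) * Sf κ₀ u σ' t)
      MeasureTheory.volume 0 ℓ :=
    ((hΦcont.comp hV_c).mul hS_c).intervalIntegrable _ _
  -- length bounds
  have hLc : ℓ * c ≤ Lf ℓ κ₀ u t := by
    have h1 := intervalIntegral.integral_mono_on (μ := MeasureTheory.volume) hℓ.le
      (_root_.intervalIntegrable_const (c := c)) hSint (fun x _ => hSc x)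
    unfold Lf
    simpa [mul_comm] using h1
  have hLpos : 0 < Lf ℓ κ₀ u t := lt_of_lt_of_le (mul_pos hℓ hcpos) hLc
  set I := ∫ σ' in (0:ℝ)..ℓ, Φ (Vf κ₀ u σ' t) * Sf κ₀ u σ' t with hI
  have hIb : |I| ≤ B * Lf ℓ κ₀ u t := by
    have h1 : |I| ≤ ∫ σ' in (0:ℝ)..ℓ, |Φ (Vf κ₀ u σ' t) * Sf κ₀ u σ' t| :=
      intervalIntegral.abs_integral_le_integral_abs hℓ.le
    have h2 : (∫ σ' in (0:ℝ)..ℓ, |Φ (Vf κ₀ u σ' t) * Sf κ₀ u σ' t|)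
        ≤ ∫ σ' in (0:ℝ)..ℓ, B * Sf κ₀ u σ' t := by
      apply intervalIntegral.integral_mono_on hℓ.le hΦSint.abs
        (hSint.const_mul B)
      intro x _
      rw [abs_mul, abs_of_nonneg (le_trans hcpos.le (hSc x))]
      exact mul_le_mul_of_nonneg_right (hB _) (le_trans hcpos.le (hSc x))
    have h3 : (∫ σ' in (0:ℝ)..ℓ, B * Sf κ₀ u σ' t) = B * Lf ℓ κ₀ u t := by
      unfold Lf
      exact intervalIntegral.integral_const_mul _ _
    linarith
  -- pointwise identities at (σ, t)
  have haknn : (0:ℝ) < 1 - u σ t * κ₀ σ := lt_of_lt_of_le hcpos (hone σ)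
  have hakne : (1 - u σ t * κ₀ σ) ≠ 0 := ne_of_gt haknn
  have hSeq : Sf κ₀ u σ t = 1 - u σ t * κ₀ σ := by
    unfold Sf
    rw [h0]
    simpa using Real.sqrt_sq haknn.le
  have hVeq : Vf κ₀ u σ t = ut u σ t := by
    unfold Vf
    rw [hSeq, div_self hakne, one_mul]
  have hcurveq : curv κ₀ u σ t
      = uσσ u σ t / (1 - u σ t * κ₀ σ)^2 + κ₀ σ / (1 - u σ t * κ₀ σ) := by
    unfold curv
    rw [h0, hSeq]
    field_simp
    ring
  have eqn := hsol.eqn σ t ht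
  rw [hSeq, hVeq, hcurveq, div_self hakne, one_mul, one_mul] at eqn
  have hfrac : (1 - u σ t * κ₀ σ) / ((1 - u σ t * κ₀ σ) * Lf ℓ κ₀ u t)
      = 1 / Lf ℓ κ₀ u t := by
    rw [div_mul_eq_div_div, div_self hakne]
  rw [hfrac] at eqn
  have heq : ut u σ t - uσσ u σ t / (1 - u σ t * κ₀ σ)^2
      = Φ (ut u σ t) + κ₀ σ / (1 - u σ t * κ₀ σ) - (I + 2*π) / Lf ℓ κ₀ u t := by
    have h4 : 1 / Lf ℓ κ₀ u t * (I + 2*π) = (I + 2*π) / Lf ℓ κ₀ u t := by ring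
    rw [← hI, h4] at eqn
    linarith
  -- bounds on rhs
  have b1 : |Φ (ut u σ t)| ≤ B := hB _
  have b2 : |κ₀ σ / (1 - u σ t * κ₀ σ)| ≤ K / c := by
    rw [abs_div, abs_of_pos haknn]
    exact div_le_div₀ hKnn (hK σ) hcpos (hone σ)
  have b3 : |(I + 2*π) / Lf ℓ κ₀ u t| ≤ B + 2*π/(ℓ*c) := by
    rw [abs_div, abs_of_pos hLpos]
    have h5 : |I + 2*π| ≤ B * Lf ℓ κ₀ u t + 2*π := by
      have := abs_add_le I (2*π)
      have hπ : |(2:ℝ)*π| = 2*π := abs_of_pos (by positivity)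
      linarith
    have h6 : (B * Lf ℓ κ₀ u t + 2*π) / Lf ℓ κ₀ u t
        = B + 2*π / Lf ℓ κ₀ u t := by
      field_simp
    have h7 : 2*π / Lf ℓ κ₀ u t ≤ 2*π/(ℓ*c) :=
      div_le_div_of_nonneg_left (by positivity) (mul_pos hℓ hcpos) hLc
    calc |I + 2*π| / Lf ℓ κ₀ u t ≤ (B * Lf ℓ κ₀ u t + 2*π) / Lf ℓ κ₀ u t :=
          by gcongr
      _ = B + 2*π / Lf ℓ κ₀ u t := h6
      _ ≤ B + 2*π/(ℓ*c) := by linarith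
  rw [heq]
  have := abs_add_le (Φ (ut u σ t) + κ₀ σ / (1 - u σ t * κ₀ σ)) (-((I + 2*π) / Lf ℓ κ₀ u t))
  rw [abs_neg] at this
  have h8 := abs_add_le (Φ (ut u σ t)) (κ₀ σ / (1 - u σ t * κ₀ σ))
  have h9 : Φ (ut u σ t) + κ₀ σ / (1 - u σ t * κ₀ σ) - (I + 2*π) / Lf ℓ κ₀ u t
      = (Φ (ut u σ t) + κ₀ σ / (1 - u σ t * κ₀ σ)) + (-((I + 2*π) / Lf ℓ κ₀ u t)) := by ring
  rw [h9]
  linarith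

private lemma principle (ℓ T R M : ℝ) (hℓ : 0 < ℓ) (hT : 0 < T)
    (v : ℝ → ℝ → ℝ)
    (hper : ∀ t ∈ Icc (0:ℝ) T, Function.Periodic (fun σ => v σ t) ℓ)
    (hcont : Continuous fun p : ℝ × ℝ => v p.1 p.2)
    (hsm : ∀ t ∈ Icc (0:ℝ) T, ContDiff ℝ 2 (fun σ => v σ t))
    (hdt : ∀ σ : ℝ, ∀ t ∈ Icc (0:ℝ) T, DifferentiableAt ℝ (fun s => v σ s) t)
    (hkey : ∀ σ : ℝ, ∀ t ∈ Icc (0:ℝ) T, 0 < t →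
      deriv (fun x => v x t) σ = 0 → iteratedDeriv 2 (fun x => v x t) σ ≤ 0 →
      deriv (fun s => v σ s) t ≤ R)
    (hM : ∀ σ : ℝ, v σ 0 ≤ M)
    (σ₀ : ℝ) (t₀ : ℝ) (ht₀ : t₀ ∈ Icc (0:ℝ) T) :
    v σ₀ t₀ ≤ M + R * t₀ := by
  -- reduction to the fundamental domain
  have hred : ∀ x : ℝ, ∀ t ∈ Icc (0:ℝ) T, ∃ y ∈ Icc (0:ℝ) ℓ, v y t = v x t := by
    intro x t ht
    refine ⟨x - ⌊x / ℓ⌋ * ℓ, ⟨Int.sub_floor_div_mul_nonneg x hℓ,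
      (Int.sub_floor_div_mul_lt x hℓ).le⟩, ?_⟩
    exact (hper t ht).sub_int_mul_eq ⌊x / ℓ⌋
  rcases eq_or_lt_of_le ht₀.1 with h1 | ht₀pos
  · rw [← h1, mul_zero, add_zero]
    exact hM σ₀
  refine le_of_forall_pos_le_add ?_
  intro η hη
  have hε : 0 < η / t₀ := div_pos hη ht₀pos
  set ε := η / t₀ with hεdef
  have hgoal : v σ₀ t₀ ≤ M + (R + ε) * t₀ → v σ₀ t₀ ≤ M + R * t₀ + η := by
    intro h
    have : (R + ε) * t₀ = R * t₀ + η := by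
      rw [hεdef]; field_simp
    linarith
  apply hgoal
  set g : ℝ × ℝ → ℝ := fun p => v p.1 p.2 - (R + ε) * p.2 with hg
  have hgc : Continuous g := hcont.sub (continuous_const.mul continuous_snd)
  have hKcpt : IsCompact (Icc (0:ℝ) ℓ ×ˢ Icc (0:ℝ) t₀) := isCompact_Icc.prod isCompact_Icc
  have hKne : (Icc (0:ℝ) ℓ ×ˢ Icc (0:ℝ) t₀).Nonempty :=
    ⟨(0, 0), ⟨⟨le_rfl, hℓ.le⟩, ⟨le_rfl, ht₀pos.le⟩⟩⟩
  obtain ⟨⟨σs, ts⟩, hmem, hmax⟩ := hKcpt.exists_isMaxOn hKne hgc.continuousOn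
  have hmaxK : ∀ p ∈ Icc (0:ℝ) ℓ ×ˢ Icc (0:ℝ) t₀, g p ≤ g (σs, ts) := hmax
  have hσs : σs ∈ Icc (0:ℝ) ℓ := hmem.1
  have hts : ts ∈ Icc (0:ℝ) t₀ := hmem.2
  have htsT : ts ∈ Icc (0:ℝ) T := ⟨hts.1, le_trans hts.2 ht₀.2⟩
  obtain ⟨σ₀', hσ₀'mem, hσ₀'eq⟩ := hred σ₀ t₀ ht₀
  have hg0 : g (σ₀', t₀) ≤ g (σs, ts) :=
    hmaxK _ ⟨hσ₀'mem, ⟨ht₀pos.le, le_rfl⟩⟩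
  have hg0' : v σ₀' t₀ - (R + ε) * t₀ ≤ v σs ts - (R + ε) * ts := hg0
  rcases eq_or_lt_of_le hts.1 with hts0 | htspos
  · -- maximum attained at t = 0
    rw [← hts0] at hg0'
    rw [← hσ₀'eq]
    have := hM σs
    simp at hg0'
    linarith
  · -- interior maximum in time: contradiction
    exfalso
    have hmaxσ : IsMaxOn (fun x => v x ts) univ σs := by
      intro x _
      obtain ⟨y, hy, hyeq⟩ := hred x ts htsT
      have := hmaxK (y, ts) ⟨hy, hts⟩
      simp only [hg] at this
      simp only [mem_setOf_eq]
      rw [← hyeq]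
      linarith
    have hloc : IsLocalMax (fun x => v x ts) σs := hmaxσ.isLocalMax Filter.univ_mem
    have hd0 : deriv (fun x => v x ts) σs = 0 := hloc.deriv_eq_zero
    have hd2 : iteratedDeriv 2 (fun x => v x ts) σs ≤ 0 :=
      aux_second_deriv_nonpos _ (hsm ts htsT) σs hloc
    -- time derivative at the max
    set h : ℝ → ℝ := fun s => v σs s - (R + ε) * s with hh
    have hhd : DifferentiableAt ℝ h ts :=
      (hdt σs ts htsT).sub ((differentiableAt_fun_id.const_mul (R + ε)))
    have hhmax : ∀ s ∈ Icc (0:ℝ) ts, h s ≤ h ts := by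
      intro s hs
      have := hmaxK (σs, s) ⟨hσs, ⟨hs.1, le_trans hs.2 hts.2⟩⟩
      simpa [hg, hh] using this
    have hder := aux_deriv_nonneg_left h ts htspos hhd hhmax
    have hderh : deriv h ts = deriv (fun s => v σs s) ts - (R + ε) := by
      rw [hh]
      rw [deriv_fun_sub (hdt σs ts htsT) (differentiableAt_fun_id.const_mul (R + ε))]
      have hlin : deriv (fun y : ℝ => (R + ε) * y) ts = (R + ε) := by
        have := ((hasDerivAt_id ts).const_mul (R + ε)).deriv
        simpa using this
      rw [hlin]
    have hut : R + ε ≤ deriv (fun s => v σs s) ts := by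
      rw [hderh] at hder; linarith
    have := hkey σs ts htsT htspos hd0 hd2
    linarith

/-- L∞ growth bound via maximum principle. There exists R ≥ 0
depending only on the fixed data ℓ, κ₀, δ₀, Φ such that every classical
solution u with |u| ≤ δ₀ on I × [0, T] satisfies
|u(σ,t)| ≤ sup_{σ′}|u(σ′,0)| + R·t. -/
theorem stmt8 (ℓ δ₀ J : ℝ) (κ₀ Φ : ℝ → ℝ)
    (hℓ : 0 < ℓ) (hκ₀ : ContDiff ℝ 1 κ₀) (hκ₀per : Function.Periodic κ₀ ℓ)
    (hδ₀ : 0 < δ₀) (hsmall : ∀ σ : ℝ, δ₀ * |κ₀ σ| < 1)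
    (hJ0 : 0 ≤ J) (hJ1 : J < 1)
    (hΦlip : ∀ a b : ℝ, |Φ a - Φ b| ≤ J * |a - b|)
    (hΦbd : ∃ B : ℝ, ∀ x : ℝ, |Φ x| ≤ B) :
    ∃ R : ℝ, 0 ≤ R ∧
      ∀ T : ℝ, 0 < T → ∀ u : ℝ → ℝ → ℝ,
        IsClassicalSol ℓ κ₀ Φ T u →
        (∀ σ : ℝ, ∀ t ∈ Icc (0:ℝ) T, |u σ t| ≤ δ₀) →
        ∀ σ : ℝ, ∀ t ∈ Icc (0:ℝ) T,
          |u σ t| ≤ (⨆ σ' : ℝ, |u σ' 0|) + R * t := by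
  obtain ⟨B, hB⟩ := hΦbd
  have hBnn : 0 ≤ B := le_trans (abs_nonneg _) (hB 0)
  have hΦcont : Continuous Φ := by
    have : LipschitzWith ⟨J, hJ0⟩ Φ := by
      apply LipschitzWith.of_dist_le_mul
      intro a b
      rw [Real.dist_eq, Real.dist_eq]
      exact hΦlip a b
    exact this.continuous
  -- bound for κ₀
  obtain ⟨σm, _, hσm⟩ := isCompact_Icc.exists_isMaxOn (nonempty_Icc.mpr hℓ.le)
    (hκ₀.continuous.abs.continuousOn (s := Icc (0:ℝ) ℓ))
  set K := |κ₀ σm| with hKdef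
  have hK : ∀ σ : ℝ, |κ₀ σ| ≤ K := by
    intro σ
    have hy : σ - ⌊σ / ℓ⌋ * ℓ ∈ Icc (0:ℝ) ℓ :=
      ⟨Int.sub_floor_div_mul_nonneg σ hℓ, (Int.sub_floor_div_mul_lt σ hℓ).le⟩
    have heq : κ₀ (σ - ⌊σ / ℓ⌋ * ℓ) = κ₀ σ := hκ₀per.sub_int_mul_eq ⌊σ / ℓ⌋
    have := hσm hy
    simpa [heq] using this
  have hKnn : 0 ≤ K := le_trans (abs_nonneg _) (hK 0)
  set c := 1 - δ₀ * K with hcdef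
  have hcpos : 0 < c := by
    have := hsmall σm
    rw [hcdef, hKdef]; linarith
  refine ⟨2*B + K/c + 2*π/(ℓ*c), by positivity, ?_⟩
  set R := 2*B + K/c + 2*π/(ℓ*c) with hRdef
  intro T hT u hsol hbd σ t ht
  set M := ⨆ σ' : ℝ, |u σ' 0| with hMdef
  have h0T : (0:ℝ) ∈ Icc (0:ℝ) T := ⟨le_rfl, hT.le⟩
  have hbdd : BddAbove (range fun σ' : ℝ => |u σ' 0|) := by
    refine ⟨δ₀, ?_⟩
    rintro y ⟨σ', rfl⟩
    exact hbd σ' 0 h0T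
  have hM : ∀ σ' : ℝ, |u σ' 0| ≤ M := fun σ' => le_ciSup hbdd σ'
  -- upper bound
  have hupper : u σ t ≤ M + R * t := by
    apply principle ℓ T R M hℓ hT u hsol.periodic hsol.cont hsol.smooth_σ hsol.diff_t
      ?_ (fun σ' => le_trans (le_abs_self _) (hM σ')) σ t ht
    intro σ' t' ht' ht'pos hd0 hd2
    have hkA := keyA ℓ δ₀ B K c κ₀ Φ T hℓ hκ₀ hδ₀ hB hK hcdef hcpos hΦcont u hsol hbd
      σ' t' ht' hd0
    have habs := (abs_le.mp hkA).2
    have hpos : (0:ℝ) < 1 - u σ' t' * κ₀ σ' := by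
      have h1 : u σ' t' * κ₀ σ' ≤ δ₀ * K := by
        calc u σ' t' * κ₀ σ' ≤ |u σ' t' * κ₀ σ'| := le_abs_self _
          _ = |u σ' t'| * |κ₀ σ'| := abs_mul _ _
          _ ≤ δ₀ * K := mul_le_mul (hbd σ' t' ht') (hK σ') (abs_nonneg _) hδ₀.le
      rw [hcdef] at hcpos; linarith
    have hdivnp : uσσ u σ' t' / (1 - u σ' t' * κ₀ σ')^2 ≤ 0 :=
      div_nonpos_iff.mpr (Or.inr ⟨hd2, sq_nonneg _⟩)
    have : ut u σ' t' ≤ R := by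
      rw [hRdef]; unfold ut uσσ at *
      linarith
    exact this
  -- lower bound, applying the principle to -u
  have hlower : -u σ t ≤ M + R * t := by
    apply principle ℓ T R M hℓ hT (fun x s => -(u x s))
      ?_ hsol.cont.neg ?_ ?_ ?_ (fun σ' => le_trans (neg_le_abs _) (hM σ')) σ t ht
    · intro t' ht'
      intro x
      have h := hsol.periodic t' ht' x
      simp only at h ⊢
      rw [h]
    · intro t' ht'
      exact (hsol.smooth_σ t' ht').neg
    · intro σ' t' ht'
      exact (hsol.diff_t σ' t' ht').neg
    · intro σ' t' ht' ht'pos hd0 hd2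
      have hd0' : deriv (fun x => u x t') σ' = 0 := by
        have h := deriv.fun_neg (f := fun x => u x t') (x := σ')
        rw [h] at hd0
        linarith
      have hd2' : 0 ≤ iteratedDeriv 2 (fun x => u x t') σ' := by
        have h := iteratedDeriv_fun_neg 2 (fun x => u x t') σ'
        rw [h] at hd2
        linarith
      have hkA := keyA ℓ δ₀ B K c κ₀ Φ T hℓ hκ₀ hδ₀ hB hK hcdef hcpos hΦcont u hsol hbd
        σ' t' ht' hd0'
      have habs := (abs_le.mp hkA).1
      have hpos : (0:ℝ) < 1 - u σ' t' * κ₀ σ' := by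
        have h1 : u σ' t' * κ₀ σ' ≤ δ₀ * K := by
          calc u σ' t' * κ₀ σ' ≤ |u σ' t' * κ₀ σ'| := le_abs_self _
            _ = |u σ' t'| * |κ₀ σ'| := abs_mul _ _
            _ ≤ δ₀ * K := mul_le_mul (hbd σ' t' ht') (hK σ') (abs_nonneg _) hδ₀.le
        rw [hcdef] at hcpos; linarith
      have hdivnn : 0 ≤ uσσ u σ' t' / (1 - u σ' t' * κ₀ σ')^2 :=
        div_nonneg hd2' (sq_nonneg _)
      have hderneg : deriv (fun s => -(u σ' s)) t' = -(ut u σ' t') := by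
        exact deriv.fun_neg (f := fun s => u σ' s) (x := t')
      rw [hderneg, hRdef]
      unfold ut uσσ at *
      linarith
  exact abs_le.mpr ⟨by linarith, hupper⟩
end
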